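/- There is an absolute constant C such that for every finite connected undirected graph G = (V, E, w) on n vertices with nonnegative real edge weights and every integer k > 1, there exists a weighted graph H on vertex set V with at most C · (k·n + n^{1 + 1/(2^k − 1)}) edges such that d_H ≥ d_G and, for every 0 < ε < 1 and every path P in G from x to y, d_H(x, y) ≤ (1 + ε) · w(P) + β · W(P), where w(P) is the total weight of P, W(P) is the maximum edge weight on P, and β = (C·k/ε)^{k−1}. -/

import Mathlib

open scoped ENNReal Classical

set_option linter.unusedSectionVars false
set_option linter.unusedVariables false
set_option linter.unnecessarySimpa false
set_option maxHeartbeats 1000000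

namespace ASP

variable {V : Type*}

/-- The total weight of a walk `p`, with edge weights given by `w`. -/
noncomputable def wWeight {G : SimpleGraph V} (w : V → V → ℝ≥0∞) {x y : V}
    (p : G.Walk x y) : ℝ≥0∞ :=
  (p.darts.map fun d => w d.toProd.1 d.toProd.2).sum

/-- The shortest-path distance between `x` and `y` in the graph `G` with edge weights `w`. -/
noncomputable def gdist (G : SimpleGraph V) (w : V → V → ℝ≥0∞) (x y : V) : ℝ≥0∞ :=
  ⨅ p : G.Walk x y, wWeight w p

/-- The maximum edge weight on a walk `p` (zero for the empty walk). -/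
noncomputable def maxW {G : SimpleGraph V} (w : V → V → ℝ≥0∞) {x y : V}
    (p : G.Walk x y) : ℝ≥0∞ :=
  (p.darts.map fun d => w d.toProd.1 d.toProd.2).foldr max 0

section GdistBasics

variable {G : SimpleGraph V} {w : V → V → ℝ≥0∞} {x y z : V}

lemma wWeight_nil : wWeight w (SimpleGraph.Walk.nil : G.Walk x x) = 0 := rfl

lemma wWeight_cons (h : G.Adj x y) (p : G.Walk y z) :
    wWeight w (SimpleGraph.Walk.cons h p) = w x y + wWeight w p := by
  simp [wWeight]

lemma wWeight_append (p : G.Walk x y) (q : G.Walk y z) :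
    wWeight w (p.append q) = wWeight w p + wWeight w q := by
  simp [wWeight, SimpleGraph.Walk.darts_append]

lemma gdist_le_wWeight (p : G.Walk x y) : gdist G w x y ≤ wWeight w p :=
  iInf_le _ p

lemma gdist_self : gdist G w x x = 0 :=
  le_antisymm (gdist_le_wWeight SimpleGraph.Walk.nil) (zero_le)

lemma gdist_le_of_adj (h : G.Adj x y) : gdist G w x y ≤ w x y := by
  have := gdist_le_wWeight (w := w) (SimpleGraph.Walk.cons h SimpleGraph.Walk.nil)
  simpa [wWeight_cons, wWeight_nil] using this

lemma gdist_triangle : gdist G w x z ≤ gdist G w x y + gdist G w y z := by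
  rw [gdist, gdist, gdist, ENNReal.iInf_add]
  refine le_iInf fun p => ?_
  rw [ENNReal.add_iInf]
  refine le_iInf fun q => ?_
  refine le_trans (iInf_le _ (p.append q)) ?_
  rw [wWeight_append]


lemma dart_weight_symm_eq (hsym : ∀ u v, G.Adj u v → w u v = w v u) (p : G.Walk x y) :
    wWeight w p.reverse = wWeight w p := by
  rw [wWeight, SimpleGraph.Walk.darts_reverse, List.map_reverse, List.sum_reverse,
    List.map_map, wWeight]
  congr 1
  refine List.map_congr_left fun d hd => ?_
  have hadj : G.Adj d.toProd.1 d.toProd.2 := d.adj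
  simp only [Function.comp_apply, SimpleGraph.Dart.symm]
  exact (hsym _ _ hadj).symm

lemma gdist_symm (hsym : ∀ u v, G.Adj u v → w u v = w v u) :
    gdist G w x y = gdist G w y x := by
  have h : ∀ a b : V, gdist G w a b ≤ gdist G w b a := by
    intro a b
    refine le_iInf fun p => ?_
    calc gdist G w a b ≤ wWeight w p.reverse := gdist_le_wWeight _
    _ = wWeight w p := dart_weight_symm_eq hsym p
  exact le_antisymm (h x y) (h y x)

lemma wWeight_ne_top (hfin : ∀ u v, G.Adj u v → w u v ≠ ⊤) (p : G.Walk x y) :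
    wWeight w p ≠ ⊤ := by
  induction p with
  | nil => simp [wWeight_nil]
  | cons h p ih =>
    rw [wWeight_cons]
    exact ENNReal.add_ne_top.2 ⟨hfin _ _ h, ih⟩

lemma gdist_ne_top (hconn : G.Connected) (hfin : ∀ u v, G.Adj u v → w u v ≠ ⊤) :
    gdist G w x y ≠ ⊤ := by
  obtain ⟨p⟩ := hconn.preconnected x y
  exact fun h => (wWeight_ne_top hfin p) (top_le_iff.1 (h ▸ gdist_le_wWeight p))

/-- The original distance is a lower bound for any walk-weight in any graph whose
weights are the `G`-distances. -/
lemma gdist_le_wWeight_gdist {H : SimpleGraph V} (p : H.Walk x y) :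
    gdist G w x y ≤ wWeight (fun u v => gdist G w u v) p := by
  induction p with
  | nil => simp [wWeight_nil, gdist_self]
  | @cons a b c h p ih =>
    rw [wWeight_cons]
    exact le_trans gdist_triangle (add_le_add_right ih _)

lemma gdist_le_gdist_emulator {H : SimpleGraph V} :
    gdist G w x y ≤ gdist H (fun u v => gdist G w u v) x y :=
  le_iInf fun p => gdist_le_wWeight_gdist p

lemma wWeight_eq_sum_getVert (p : G.Walk x y) :
    wWeight w p = ∑ t ∈ Finset.range p.length, w (p.getVert t) (p.getVert (t + 1)) := by
  induction p with
  | nil => simp [wWeight_nil]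
  | @cons a b c h p ih =>
    rw [wWeight_cons, ih]
    rw [SimpleGraph.Walk.length_cons, Finset.sum_range_succ']
    simp [SimpleGraph.Walk.getVert_cons_succ]
    exact add_comm _ _

lemma le_maxW (p : G.Walk x y) {t : ℕ} (ht : t < p.length) :
    w (p.getVert t) (p.getVert (t + 1)) ≤ maxW w p := by
  induction p generalizing t with
  | nil => simp at ht
  | @cons a b c h p ih =>
    have hcons : maxW w (SimpleGraph.Walk.cons h p) = max (w a b) (maxW w p) := rfl
    rcases Nat.eq_zero_or_pos t with rfl | hpos
    · rw [hcons]
      simpa using le_max_left _ _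
    · obtain ⟨t', rfl⟩ := Nat.exists_eq_succ_of_ne_zero hpos.ne'
      rw [SimpleGraph.Walk.length_cons] at ht
      rw [hcons]
      have := ih (t := t') (by omega)
      simp only [SimpleGraph.Walk.getVert_cons_succ]
      exact le_trans this (le_max_right _ _)

lemma maxW_ne_top (hfin : ∀ u v, G.Adj u v → w u v ≠ ⊤) (p : G.Walk x y) :
    maxW w p ≠ ⊤ := by
  induction p with
  | nil => simp [maxW]
  | cons h p ih =>
    have hcons : maxW w (SimpleGraph.Walk.cons h p) = max (w _ _) (maxW w p) := rfl
    rw [hcons]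
    simp only [ne_eq, max_eq_top, not_or]
    exact ⟨hfin _ _ h, ih⟩

end GdistBasics

section Build

variable [Fintype V] [DecidableEq V]

noncomputable def ix : V → ℕ := fun v => ((Fintype.equivFin V) v : ℕ)

lemma ix_inj : Function.Injective (ix (V := V)) := fun a b h =>
  (Fintype.equivFin V).injective (Fin.ext h)

variable (d : V → V → ℝ≥0∞)

instance scoreRel_trans (f : V → ℝ≥0∞) :
    IsTrans V (fun a b => toLex (f a, ix a) ≤ toLex (f b, ix b)) :=
  ⟨fun _ _ _ hab hbc => le_trans hab hbc⟩

instance scoreRel_antisymm (f : V → ℝ≥0∞) :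
    IsAntisymm V (fun a b => toLex (f a, ix a) ≤ toLex (f b, ix b)) := by
  refine ⟨fun a b hab hba => ?_⟩
  have h := le_antisymm hab hba
  have h2 : (f a, ix a) = (f b, ix b) := by
    have := congrArg (fun x : (ℝ≥0∞ ×ₗ ℕ) => (ofLex x : ℝ≥0∞ × ℕ)) h
    simpa using this
  exact ix_inj (congrArg Prod.snd h2)

instance scoreRel_total (f : V → ℝ≥0∞) :
    IsTotal V (fun a b => toLex (f a, ix a) ≤ toLex (f b, ix b)) :=
  ⟨fun _ _ => le_total _ _⟩

/-- Sort the elements of `A` by score `f`, ties broken by `ix`. -/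
noncomputable def scoreSort (f : V → ℝ≥0∞) (A : Finset V) : List V :=
  Finset.sort A (fun a b => toLex (f a, ix a) ≤ toLex (f b, ix b))

lemma scoreSort_sorted (f : V → ℝ≥0∞) (A : Finset V) :
    (scoreSort f A).Pairwise (fun a b => toLex (f a, ix a) ≤ toLex (f b, ix b)) :=
  Finset.pairwise_sort _ _

lemma scoreSort_toFinset (f : V → ℝ≥0∞) (A : Finset V) :
    (scoreSort f A).toFinset = A := Finset.sort_toFinset _ _

lemma scoreSort_nodup (f : V → ℝ≥0∞) (A : Finset V) : (scoreSort f A).Nodup :=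
  Finset.sort_nodup _ _

lemma scoreSort_length (f : V → ℝ≥0∞) (A : Finset V) :
    (scoreSort f A).length = A.card := Finset.length_sort _

lemma scoreSort_mem (f : V → ℝ≥0∞) (A : Finset V) (v : V) :
    v ∈ scoreSort f A ↔ v ∈ A := Finset.mem_sort _

/-- The `s` nearest elements of `A` to `u`. -/
noncomputable def nearBall (A : Finset V) (s : ℕ) (u : V) : Finset V :=
  ((scoreSort (d u) A).take s).toFinset

noncomputable def nearRad (A : Finset V) (s : ℕ) (u : V) : ℝ≥0∞ :=
  (nearBall d A s u).sup (d u)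

lemma nearBall_subset (A : Finset V) (s : ℕ) (u : V) : nearBall d A s u ⊆ A := by
  intro v hv
  rw [nearBall, List.mem_toFinset] at hv
  have := (List.take_sublist s _).subset hv
  rwa [scoreSort_mem] at this

lemma nearBall_card (A : Finset V) (s : ℕ) (u : V) (hsA : s ≤ A.card) :
    (nearBall d A s u).card = s := by
  rw [nearBall, List.toFinset_card_of_nodup ((scoreSort_nodup _ _).sublist (List.take_sublist _ _))]
  rw [List.length_take, scoreSort_length]
  omega

lemma nearRad_le (A : Finset V) (s : ℕ) (u : V) {v : V} (hvA : v ∈ A)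
    (hv : v ∉ nearBall d A s u) : nearRad d A s u ≤ d u v := by
  refine Finset.sup_le fun b hb => ?_
  rw [nearBall, List.mem_toFinset] at hb hv
  have hvdrop : v ∈ (scoreSort (d u) A).drop s := by
    have hv2 : v ∈ scoreSort (d u) A := (scoreSort_mem _ _ _).2 hvA
    rcases (List.mem_append.1 (by rw [List.take_append_drop]; exact hv2 : 
      v ∈ (scoreSort (d u) A).take s ++ (scoreSort (d u) A).drop s)) with h | h
    · exact absurd h hv
    · exact h
  have hrel := (scoreSort_sorted (d u) A).rel_of_mem_take_of_mem_drop hb hvdrop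
  rcases (Prod.Lex.le_iff).1 hrel with h | ⟨h, _⟩
  · exact le_of_lt h
  · exact le_of_eq h

/-- Greedy selection of centers with pairwise disjoint balls, processed in list order. -/
noncomputable def sel (ball : V → Finset V) : List V → List V
  | [] => []
  | x :: xs => x :: sel ball (xs.filter fun y => Disjoint (ball x) (ball y))
  termination_by l => l.length
  decreasing_by simpa using Nat.lt_succ_of_le ((List.length_filter_le _ _).trans_eq List.length_attach)

lemma sel_sublist (ball : V → Finset V) : ∀ l : List V, (sel ball l).Sublist l
  | [] => by rw [sel]
  | x :: xs => by
    rw [sel]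
    exact List.Sublist.cons₂ x ((sel_sublist ball _).trans (List.filter_sublist))
  termination_by l => l.length
  decreasing_by simpa using Nat.lt_succ_of_le (List.length_filter_le _ _)

lemma sel_pairwise (ball : V → Finset V) : ∀ l : List V,
    (sel ball l).Pairwise fun a b => Disjoint (ball a) (ball b)
  | [] => by rw [sel]; exact List.Pairwise.nil
  | x :: xs => by
    rw [sel]
    refine List.Pairwise.cons (fun y hy => ?_) (sel_pairwise ball _)
    have := (sel_sublist ball _).subset hy
    simpa using List.of_mem_filter this
  termination_by l => l.length
  decreasing_by simpa using Nat.lt_succ_of_le (List.length_filter_le _ _)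

lemma sel_cover (ball : V → Finset V) (r : V → ℝ≥0∞) :
    ∀ l : List V, l.Pairwise (fun a b => toLex (r a, ix a) ≤ toLex (r b, ix b)) →
    (∀ y ∈ l, (ball y).Nonempty) →
    ∀ y ∈ l, ∃ c ∈ sel ball l, ¬ Disjoint (ball c) (ball y) ∧ r c ≤ r y
  | [] => by intro _ _ y hy; simp at hy
  | x :: xs => by
    intro hsort hne y hy
    have hkey : ∀ z ∈ xs, toLex (r x, ix x) ≤ toLex (r z, ix z) := by
      intro z hz
      exact (List.pairwise_cons.1 hsort).1 z hz
    rcases List.mem_cons.1 hy with h | hyxs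
    · subst h
      refine ⟨y, by rw [sel]; exact List.mem_cons_self, ?_, le_refl _⟩
      intro hd
      rw [Finset.disjoint_self_iff_empty] at hd
      exact (hne y (List.mem_cons_self)).ne_empty hd
    · by_cases hdis : Disjoint (ball x) (ball y)
      · have hyfil : y ∈ xs.filter fun y => Disjoint (ball x) (ball y) := by
          rw [List.mem_filter]
          exact ⟨hyxs, by simpa using hdis⟩
        have hsort' : (xs.filter fun y => Disjoint (ball x) (ball y)).Pairwise _ :=
          (List.pairwise_cons.1 hsort).2.sublist (List.filter_sublist)
        have hne' : ∀ z ∈ xs.filter fun y => Disjoint (ball x) (ball y), (ball z).Nonempty :=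
          fun z hz => hne z (List.mem_cons_of_mem _ ((List.filter_sublist).subset hz))
        obtain ⟨c, hc, hcd, hcr⟩ := sel_cover ball r _ hsort' hne' y hyfil
        refine ⟨c, ?_, hcd, hcr⟩
        rw [sel]
        exact List.mem_cons_of_mem _ hc
      · refine ⟨x, by rw [sel]; exact List.mem_cons_self, hdis, ?_⟩
        rcases (Prod.Lex.le_iff).1 (hkey y hyxs) with h | ⟨h, _⟩
        · exact le_of_lt h
        · exact le_of_eq h
  termination_by l => l.length
  decreasing_by simpa using Nat.lt_succ_of_le (List.length_filter_le _ _)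

end Build


section Build2

variable [Fintype V] [DecidableEq V]
variable (d : V → V → ℝ≥0∞)

/-- One level of the construction: nearest balls of size `s`, and a greedy set of centers with
pairwise disjoint balls, covering everything with radius-monotone centers. -/
lemma build_spec (hds : ∀ x y, d x y = d y x) (hdt : ∀ x y z, d x z ≤ d x y + d y z)
    (A : Finset V) (s : ℕ) (hs1 : 1 ≤ s) (hsA : s ≤ A.card) :
    ∃ (ball : V → Finset V) (ctr : V → V) (B : Finset V),
      (∀ u, ball u ⊆ A) ∧ (∀ u, (ball u).card = s) ∧
      (∀ u, ∀ v ∈ A, v ∉ ball u → (ball u).sup (d u) ≤ d u v) ∧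
      B ⊆ A ∧ B.card * s ≤ A.card ∧
      (∀ u ∈ A, ctr u ∈ B ∧ d u (ctr u) ≤ 2 * (ball u).sup (d u)) := by
  classical
  set ball := fun u => nearBall d A s u with hball
  set radF := fun u => nearRad d A s u with hrad
  set L := scoreSort radF A with hL
  set selL := sel ball L with hsel
  have hLsort : L.Pairwise (fun a b => toLex (radF a, ix a) ≤ toLex (radF b, ix b)) :=
    scoreSort_sorted _ _
  have hballcard : ∀ u, (ball u).card = s := fun u => nearBall_card d A s u hsA
  have hballne : ∀ y ∈ L, (ball y).Nonempty := by
    intro y _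
    rw [← Finset.card_pos, hballcard]
    omega
  have hcover := sel_cover ball radF L hLsort hballne
  set ctr := fun u => if h : ∃ c ∈ selL, ¬ Disjoint (ball c) (ball u) ∧ radF c ≤ radF u
    then h.choose else u with hctr
  refine ⟨ball, ctr, selL.toFinset, fun u => nearBall_subset d A s u, hballcard,
    fun u v hvA hv => nearRad_le d A s u hvA hv, ?_, ?_, ?_⟩
  · intro c hc
    rw [List.mem_toFinset] at hc
    have := (sel_sublist ball L).subset hc
    rwa [scoreSort_mem] at this
  · -- counting
    have hpw : ∀ x ∈ selL.toFinset, ∀ y ∈ selL.toFinset, x ≠ y → Disjoint (ball x) (ball y) := by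
      intro x hx y hy hxy
      rw [List.mem_toFinset] at hx hy
      haveI : Std.Symm (fun a b => Disjoint (ball a) (ball b)) := ⟨fun a b h => h.symm⟩
      exact (sel_pairwise ball L).forall hx hy hxy
    have hcard := Finset.card_biUnion hpw
    have hsub : selL.toFinset.biUnion ball ⊆ A := by
      intro v hv
      rw [Finset.mem_biUnion] at hv
      obtain ⟨c, _, hc⟩ := hv
      exact nearBall_subset d A s c hc
    calc selL.toFinset.card * s = ∑ c ∈ selL.toFinset, (ball c).card := by
          simp [hballcard, mul_comm]
    _ = (selL.toFinset.biUnion ball).card := hcard.symm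
    _ ≤ A.card := Finset.card_le_card hsub
  · intro u huA
    have huL : u ∈ L := (scoreSort_mem _ _ _).2 huA
    have hex : ∃ c ∈ selL, ¬ Disjoint (ball c) (ball u) ∧ radF c ≤ radF u := hcover u huL
    rw [hctr]
    simp only [dif_pos hex]
    obtain ⟨hcmem, hcdis, hcrad⟩ := hex.choose_spec
    constructor
    · rw [List.mem_toFinset]; exact hcmem
    · obtain ⟨mm, hmm⟩ := Finset.not_disjoint_iff.1 hcdis
      have h1 : d u mm ≤ radF u := Finset.le_sup hmm.2
      have h2 : d mm hex.choose ≤ radF hex.choose := by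
        rw [hds]
        exact Finset.le_sup hmm.1
      calc d u hex.choose ≤ d u mm + d mm hex.choose := hdt _ _ _
      _ ≤ radF u + radF hex.choose := add_le_add h1 h2
      _ ≤ radF u + radF u := add_le_add_right hcrad _
      _ = 2 * (ball u).sup (d u) := by rw [two_mul]; rfl

end Build2


section Hier

variable [Fintype V] [DecidableEq V]
variable (d : V → V → ℝ≥0∞) (sfun : ℕ → ℕ) (K : ℕ)
variable (hds : ∀ x y, d x y = d y x) (hdt : ∀ x y z, d x z ≤ d x y + d y z)
variable (hs1 : ∀ i, 1 ≤ sfun i)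

noncomputable def stepData (i : ℕ) (A : Finset V) : (V → Finset V) × (V → V) × Finset V :=
  if h : sfun i < A.card ∧ i < K then
    ⟨(build_spec d hds hdt A (sfun i) (hs1 i) (le_of_lt h.1)).choose,
     (build_spec d hds hdt A (sfun i) (hs1 i) (le_of_lt h.1)).choose_spec.choose,
     (build_spec d hds hdt A (sfun i) (hs1 i) (le_of_lt h.1)).choose_spec.choose_spec.choose⟩
  else ⟨fun _ => A, id, A⟩

lemma stepData_spec {i : ℕ} {A : Finset V} (h : sfun i < A.card ∧ i < K) :
    (∀ u, (stepData d sfun K hds hdt hs1 i A).1 u ⊆ A) ∧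
    (∀ u, ((stepData d sfun K hds hdt hs1 i A).1 u).card = sfun i) ∧
    (∀ u, ∀ v ∈ A, v ∉ (stepData d sfun K hds hdt hs1 i A).1 u →
      ((stepData d sfun K hds hdt hs1 i A).1 u).sup (d u) ≤ d u v) ∧
    (stepData d sfun K hds hdt hs1 i A).2.2 ⊆ A ∧
    (stepData d sfun K hds hdt hs1 i A).2.2.card * sfun i ≤ A.card ∧
    (∀ u ∈ A, (stepData d sfun K hds hdt hs1 i A).2.1 u ∈ (stepData d sfun K hds hdt hs1 i A).2.2 ∧
      d u ((stepData d sfun K hds hdt hs1 i A).2.1 u) ≤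
        2 * ((stepData d sfun K hds hdt hs1 i A).1 u).sup (d u)) := by
  rw [stepData, dif_pos h]
  exact (build_spec d hds hdt A (sfun i) (hs1 i)
    (le_of_lt h.1)).choose_spec.choose_spec.choose_spec

lemma stepData_neg {i : ℕ} {A : Finset V} (h : ¬(sfun i < A.card ∧ i < K)) :
    stepData d sfun K hds hdt hs1 i A = ⟨fun _ => A, id, A⟩ := dif_neg h

noncomputable def lev : ℕ → Finset V
  | 0 => Finset.univ
  | (i+1) => (stepData d sfun K hds hdt hs1 i (lev i)).2.2

noncomputable def ballAt (i : ℕ) : V → Finset V :=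
  (stepData d sfun K hds hdt hs1 i (lev d sfun K hds hdt hs1 i)).1

noncomputable def ctrAt (i : ℕ) : V → V :=
  (stepData d sfun K hds hdt hs1 i (lev d sfun K hds hdt hs1 i)).2.1

noncomputable def radAt (i : ℕ) (u : V) : ℝ≥0∞ :=
  ((ballAt d sfun K hds hdt hs1 i) u).sup (d u)

def normalAt (i : ℕ) : Prop :=
  sfun i < (lev d sfun K hds hdt hs1 i).card ∧ i < K

lemma lev_succ (i : ℕ) :
    lev d sfun K hds hdt hs1 (i+1) =
      (stepData d sfun K hds hdt hs1 i (lev d sfun K hds hdt hs1 i)).2.2 := rfl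

noncomputable def stopL : ℕ :=
  Nat.find (⟨K, fun h => lt_irrefl K h.2⟩ : ∃ i, ¬ normalAt d sfun K hds hdt hs1 i)

lemma stop_le : stopL d sfun K hds hdt hs1 ≤ K :=
  Nat.find_le (fun h => lt_irrefl K h.2)

lemma normal_of_lt_stop {i : ℕ} (h : i < stopL d sfun K hds hdt hs1) :
    normalAt d sfun K hds hdt hs1 i :=
  not_not.1 (Nat.find_min
    (⟨K, fun h => lt_irrefl K h.2⟩ : ∃ i, ¬ normalAt d sfun K hds hdt hs1 i) h)

lemma not_normal_stop : ¬ normalAt d sfun K hds hdt hs1 (stopL d sfun K hds hdt hs1) :=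
  Nat.find_spec (⟨K, fun h => lt_irrefl K h.2⟩ : ∃ i, ¬ normalAt d sfun K hds hdt hs1 i)

lemma lev_frozen (hsmono : Monotone sfun) :
    ∀ i, stopL d sfun K hds hdt hs1 ≤ i →
      lev d sfun K hds hdt hs1 i = lev d sfun K hds hdt hs1 (stopL d sfun K hds hdt hs1) ∧
      ¬ normalAt d sfun K hds hdt hs1 i := by
  intro i hi
  induction i with
  | zero =>
    have : stopL d sfun K hds hdt hs1 = 0 := Nat.le_zero.1 hi
    rw [← this]
    exact ⟨rfl, not_normal_stop _ _ _ _ _ _⟩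
  | succ i ih =>
    rcases Nat.lt_or_ge (stopL d sfun K hds hdt hs1) (i+1) with h | h
    · have hi' : stopL d sfun K hds hdt hs1 ≤ i := Nat.lt_succ_iff.1 h
      obtain ⟨hlev, hnotn⟩ := ih hi'
      have hfreeze : lev d sfun K hds hdt hs1 (i+1) = lev d sfun K hds hdt hs1 i := by
        rw [lev_succ, stepData_neg]
        exact fun hc => hnotn ⟨hc.1, hc.2⟩
      constructor
      · rw [hfreeze, hlev]
      · rw [normalAt, hfreeze, hlev]
        intro hc
        rcases (not_and_or.1 (not_normal_stop d sfun K hds hdt hs1)) with hcard | hK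
        · exact hcard (lt_of_le_of_lt (hsmono (le_trans hi' (Nat.le_succ i))) hc.1)
        · exact hK (lt_of_le_of_lt (le_trans hi' (Nat.le_succ i)) hc.2)
    · have : stopL d sfun K hds hdt hs1 = i + 1 := le_antisymm hi h
      rw [← this]
      exact ⟨rfl, not_normal_stop _ _ _ _ _ _⟩

end Hier


section Hier2

variable [Fintype V] [DecidableEq V]
variable (d : V → V → ℝ≥0∞) (sfun : ℕ → ℕ) (K : ℕ)
variable (hds : ∀ x y, d x y = d y x) (hdt : ∀ x y z, d x z ≤ d x y + d y z)
variable (hs1 : ∀ i, 1 ≤ sfun i) (hsmono : Monotone sfun)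

include hsmono in
lemma normal_iff_lt_stop (i : ℕ) : normalAt d sfun K hds hdt hs1 i ↔ i < stopL d sfun K hds hdt hs1 := by
  constructor
  · intro h
    by_contra hge
    exact (lev_frozen d sfun K hds hdt hs1 hsmono i (le_of_not_gt hge)).2 h
  · exact normal_of_lt_stop d sfun K hds hdt hs1

-- spec lemmas at a normal level
lemma ball_subset_lev {i : ℕ} (h : normalAt d sfun K hds hdt hs1 i) (u : V) :
    ballAt d sfun K hds hdt hs1 i u ⊆ lev d sfun K hds hdt hs1 i :=
  (stepData_spec d sfun K hds hdt hs1 h).1 u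

lemma ball_card_lev {i : ℕ} (h : normalAt d sfun K hds hdt hs1 i) (u : V) :
    (ballAt d sfun K hds hdt hs1 i u).card = sfun i :=
  (stepData_spec d sfun K hds hdt hs1 h).2.1 u

lemma rad_le_of_not_ball {i : ℕ} (h : normalAt d sfun K hds hdt hs1 i) (u : V) {v : V}
    (hv : v ∈ lev d sfun K hds hdt hs1 i) (hnb : v ∉ ballAt d sfun K hds hdt hs1 i u) :
    radAt d sfun K hds hdt hs1 i u ≤ d u v :=
  (stepData_spec d sfun K hds hdt hs1 h).2.2.1 u v hv hnb

lemma lev_succ_subset {i : ℕ} (h : normalAt d sfun K hds hdt hs1 i) :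
    lev d sfun K hds hdt hs1 (i+1) ⊆ lev d sfun K hds hdt hs1 i := by
  rw [lev_succ]
  exact (stepData_spec d sfun K hds hdt hs1 h).2.2.2.1

lemma lev_succ_card {i : ℕ} (h : normalAt d sfun K hds hdt hs1 i) :
    (lev d sfun K hds hdt hs1 (i+1)).card * sfun i ≤ (lev d sfun K hds hdt hs1 i).card := by
  rw [lev_succ]
  exact (stepData_spec d sfun K hds hdt hs1 h).2.2.2.2.1

lemma ctr_spec {i : ℕ} (h : normalAt d sfun K hds hdt hs1 i) {u : V} (hu : u ∈ lev d sfun K hds hdt hs1 i) :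
    ctrAt d sfun K hds hdt hs1 i u ∈ lev d sfun K hds hdt hs1 (i+1) ∧ d u (ctrAt d sfun K hds hdt hs1 i u) ≤ 2 * radAt d sfun K hds hdt hs1 i u := by
  rw [lev_succ]
  exact (stepData_spec d sfun K hds hdt hs1 h).2.2.2.2.2 u hu

lemma frozen_ball {i : ℕ} (h : ¬ normalAt d sfun K hds hdt hs1 i) (u : V) :
    ballAt d sfun K hds hdt hs1 i u = lev d sfun K hds hdt hs1 i := by
  have hn : ¬(sfun i < (lev d sfun K hds hdt hs1 i).card ∧ i < K) := h
  rw [ballAt, stepData_neg d sfun K hds hdt hs1 hn]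

lemma frozen_ctr {i : ℕ} (h : ¬ normalAt d sfun K hds hdt hs1 i) (u : V) :
    ctrAt d sfun K hds hdt hs1 i u = u := by
  have hn : ¬(sfun i < (lev d sfun K hds hdt hs1 i).card ∧ i < K) := h
  rw [ctrAt, stepData_neg d sfun K hds hdt hs1 hn]
  rfl

lemma frozen_lev {i : ℕ} (h : ¬ normalAt d sfun K hds hdt hs1 i) :
    lev d sfun K hds hdt hs1 (i+1) = lev d sfun K hds hdt hs1 i := by
  have hn : ¬(sfun i < (lev d sfun K hds hdt hs1 i).card ∧ i < K) := h
  rw [lev_succ, stepData_neg d sfun K hds hdt hs1 hn]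

/-- All the emulator edges. -/
noncomputable def edgesF : Finset (Sym2 V) :=
  ((Finset.range K).biUnion fun i =>
    (lev d sfun K hds hdt hs1 i).biUnion fun u =>
      ((ballAt d sfun K hds hdt hs1 i u).image fun v => s(u,v)) ∪ {s(u, ctrAt d sfun K hds hdt hs1 i u)}) ∪
  ((lev d sfun K hds hdt hs1 (stopL d sfun K hds hdt hs1)).biUnion fun u =>
    (lev d sfun K hds hdt hs1 (stopL d sfun K hds hdt hs1)).image fun v => s(u,v))

/-- The emulator graph. -/
noncomputable def emulH : SimpleGraph V :=
  SimpleGraph.fromEdgeSet (edgesF d sfun K hds hdt hs1 : Set (Sym2 V))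

noncomputable def dH (x y : V) : ℝ≥0∞ := gdist (emulH d sfun K hds hdt hs1) d x y

lemma dH_self (x : V) : dH d sfun K hds hdt hs1 x x = 0 := gdist_self

lemma dH_triangle (x y z : V) : dH d sfun K hds hdt hs1 x z ≤ dH d sfun K hds hdt hs1 x y + dH d sfun K hds hdt hs1 y z :=
  gdist_triangle

lemma dH_le_of_edge {u v : V} (h : s(u,v) ∈ edgesF d sfun K hds hdt hs1) : dH d sfun K hds hdt hs1 u v ≤ d u v := by
  by_cases huv : u = v
  · subst huv
    rw [dH_self]
    exact zero_le
  · refine gdist_le_of_adj ?_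
    rw [emulH, SimpleGraph.fromEdgeSet_adj]
    exact ⟨h, huv⟩

lemma ball_edge {i : ℕ} (hiK : i < K) {u v : V} (hu : u ∈ lev d sfun K hds hdt hs1 i)
    (hv : v ∈ ballAt d sfun K hds hdt hs1 i u) : s(u,v) ∈ edgesF d sfun K hds hdt hs1 := by
  rw [edgesF, Finset.mem_union]
  left
  rw [Finset.mem_biUnion]
  refine ⟨i, Finset.mem_range.2 hiK, ?_⟩
  rw [Finset.mem_biUnion]
  refine ⟨u, hu, ?_⟩
  rw [Finset.mem_union]
  left
  exact Finset.mem_image_of_mem _ hv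

lemma ctr_edge {i : ℕ} (hiK : i < K) {u : V} (hu : u ∈ lev d sfun K hds hdt hs1 i) :
    s(u, ctrAt d sfun K hds hdt hs1 i u) ∈ edgesF d sfun K hds hdt hs1 := by
  rw [edgesF, Finset.mem_union]
  left
  rw [Finset.mem_biUnion]
  refine ⟨i, Finset.mem_range.2 hiK, ?_⟩
  rw [Finset.mem_biUnion]
  refine ⟨u, hu, ?_⟩
  rw [Finset.mem_union]
  right
  simp

lemma top_edge {u v : V} (hu : u ∈ lev d sfun K hds hdt hs1 (stopL d sfun K hds hdt hs1))
    (hv : v ∈ lev d sfun K hds hdt hs1 (stopL d sfun K hds hdt hs1)) : s(u,v) ∈ edgesF d sfun K hds hdt hs1 := by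
  rw [edgesF, Finset.mem_union]
  right
  rw [Finset.mem_biUnion]
  exact ⟨u, hu, Finset.mem_image_of_mem _ hv⟩

/-- Iterated climb to level `i`. -/
noncomputable def liftV : ℕ → V → V
  | 0, z => z
  | (i+1), z => ctrAt d sfun K hds hdt hs1 i (liftV i z)

/-- Total climbing cost bound up to level `i`. -/
noncomputable def kap : ℕ → V → ℝ≥0∞
  | 0, _ => 0
  | (i+1), z => kap i z +
      (if normalAt d sfun K hds hdt hs1 i then 2 * radAt d sfun K hds hdt hs1 i (liftV d sfun K hds hdt hs1 i z) else 0)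

lemma liftV_zero (z : V) : liftV d sfun K hds hdt hs1 0 z = z := rfl

lemma liftV_succ (i : ℕ) (z : V) :
    liftV d sfun K hds hdt hs1 (i+1) z = ctrAt d sfun K hds hdt hs1 i (liftV d sfun K hds hdt hs1 i z) := rfl

lemma kap_zero (z : V) : kap d sfun K hds hdt hs1 0 z = 0 := rfl

lemma kap_succ (i : ℕ) (z : V) : kap d sfun K hds hdt hs1 (i+1) z = kap d sfun K hds hdt hs1 i z +
    (if normalAt d sfun K hds hdt hs1 i then 2 * radAt d sfun K hds hdt hs1 i (liftV d sfun K hds hdt hs1 i z) else 0) := rfl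

lemma liftV_mem (i : ℕ) (z : V) : liftV d sfun K hds hdt hs1 i z ∈ lev d sfun K hds hdt hs1 i := by
  induction i with
  | zero => rw [liftV_zero, lev]; exact Finset.mem_univ z
  | succ i ih =>
    by_cases h : normalAt d sfun K hds hdt hs1 i
    · rw [liftV_succ]
      exact (ctr_spec d sfun K hds hdt hs1 h ih).1
    · rw [liftV_succ, frozen_ctr d sfun K hds hdt hs1 h, frozen_lev d sfun K hds hdt hs1 h]
      exact ih

lemma d_lift_le_kap (hd0 : ∀ x, d x x = 0) (i : ℕ) (z : V) :
    d z (liftV d sfun K hds hdt hs1 i z) ≤ kap d sfun K hds hdt hs1 i z := by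
  induction i with
  | zero => rw [liftV_zero, kap_zero, hd0]
  | succ i ih =>
    rw [liftV_succ, kap_succ]
    by_cases h : normalAt d sfun K hds hdt hs1 i
    · rw [if_pos h]
      calc d z (ctrAt d sfun K hds hdt hs1 i (liftV d sfun K hds hdt hs1 i z))
          ≤ d z (liftV d sfun K hds hdt hs1 i z) + d (liftV d sfun K hds hdt hs1 i z) (ctrAt d sfun K hds hdt hs1 i (liftV d sfun K hds hdt hs1 i z)) :=
            hdt _ _ _
      _ ≤ kap d sfun K hds hdt hs1 i z + 2 * radAt d sfun K hds hdt hs1 i (liftV d sfun K hds hdt hs1 i z) :=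
            add_le_add ih (ctr_spec d sfun K hds hdt hs1 h (liftV_mem d sfun K hds hdt hs1 i z)).2
    · rw [if_neg h, frozen_ctr d sfun K hds hdt hs1 h, add_zero]
      exact ih

lemma dH_lift_le_kap (i : ℕ) (z : V) (hiK : i ≤ K) :
    dH d sfun K hds hdt hs1 z (liftV d sfun K hds hdt hs1 i z) ≤ kap d sfun K hds hdt hs1 i z := by
  induction i with
  | zero => rw [liftV_zero, kap_zero, dH_self]
  | succ i ih =>
    have hik : i ≤ K := le_of_lt (Nat.lt_of_lt_of_le (Nat.lt_succ_self i) hiK)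
    rw [liftV_succ, kap_succ]
    by_cases h : normalAt d sfun K hds hdt hs1 i
    · rw [if_pos h]
      have hedge : s(liftV d sfun K hds hdt hs1 i z, ctrAt d sfun K hds hdt hs1 i (liftV d sfun K hds hdt hs1 i z)) ∈ edgesF d sfun K hds hdt hs1 :=
        ctr_edge d sfun K hds hdt hs1 h.2 (liftV_mem d sfun K hds hdt hs1 i z)
      calc dH d sfun K hds hdt hs1 z (ctrAt d sfun K hds hdt hs1 i (liftV d sfun K hds hdt hs1 i z))
          ≤ dH d sfun K hds hdt hs1 z (liftV d sfun K hds hdt hs1 i z) +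
              dH d sfun K hds hdt hs1 (liftV d sfun K hds hdt hs1 i z) (ctrAt d sfun K hds hdt hs1 i (liftV d sfun K hds hdt hs1 i z)) := dH_triangle d sfun K hds hdt hs1 _ _ _
      _ ≤ kap d sfun K hds hdt hs1 i z + d (liftV d sfun K hds hdt hs1 i z) (ctrAt d sfun K hds hdt hs1 i (liftV d sfun K hds hdt hs1 i z)) :=
            add_le_add (ih hik) (dH_le_of_edge d sfun K hds hdt hs1 hedge)
      _ ≤ kap d sfun K hds hdt hs1 i z + 2 * radAt d sfun K hds hdt hs1 i (liftV d sfun K hds hdt hs1 i z) :=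
            add_le_add_right (ctr_spec d sfun K hds hdt hs1 h (liftV_mem d sfun K hds hdt hs1 i z)).2 _
    · rw [if_neg h, frozen_ctr d sfun K hds hdt hs1 h, add_zero]
      exact ih hik

end Hier2


section March0

/-- Sum of weights over `[a,b)`. -/
noncomputable def AW (wt : ℕ → ℝ≥0∞) (a b : ℕ) : ℝ≥0∞ := ∑ t ∈ Finset.Ico a b, wt t

lemma AW_self (wt : ℕ → ℝ≥0∞) (a : ℕ) : AW wt a a = 0 := by simp [AW]

lemma AW_succ_right (wt : ℕ → ℝ≥0∞) {a b : ℕ} (hab : a ≤ b) :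
    AW wt a (b+1) = AW wt a b + wt b := by
  rw [AW, AW, Finset.sum_Ico_succ_top hab]

lemma AW_add (wt : ℕ → ℝ≥0∞) {a b c : ℕ} (hab : a ≤ b) (hbc : b ≤ c) :
    AW wt a b + AW wt b c = AW wt a c := by
  rw [AW, AW, AW]
  exact Finset.sum_Ico_consecutive _ hab hbc

lemma AW_mono_left (wt : ℕ → ℝ≥0∞) {a b c : ℕ} (hab : a ≤ b) (hbc : b ≤ c) :
    AW wt b c ≤ AW wt a c := by
  rw [← AW_add wt hab hbc]
  exact le_add_self

lemma AW_mono_right (wt : ℕ → ℝ≥0∞) {a b c : ℕ} (hab : a ≤ b) (hbc : b ≤ c) :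
    AW wt a b ≤ AW wt a c := by
  rw [← AW_add wt hab hbc]
  exact le_self_add

lemma AW_mono (wt : ℕ → ℝ≥0∞) {a b p q : ℕ} (hap : a ≤ p) (hpq : p ≤ q) (hqb : q ≤ b) :
    AW wt p q ≤ AW wt a b :=
  le_trans (AW_mono_left wt hap hpq) (AW_mono_right wt (le_trans hap hpq) hqb)

/-- Climbing-cost budget at each level. -/
noncomputable def GG (ρ : ℕ) : ℕ → ℝ≥0∞
  | 0 => 0
  | (l+1) => 5 * GG ρ l + 2 * (ρ:ℝ≥0∞)^l

/-- Route-error budget when deferring (Up case). -/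
noncomputable def FF (ρ : ℕ) : ℕ → ℝ≥0∞
  | 0 => 0
  | (l+1) => 3 * FF ρ l + 4 * GG ρ l

/-- Route-error budget in the direct (Good) case. -/
noncomputable def EE (ρ : ℕ) : ℕ → ℝ≥0∞
  | 0 => 0
  | (l+1) => 2 * FF ρ l + 4 * GG ρ l

lemma GG_mono (ρ : ℕ) (l : ℕ) : GG ρ l ≤ GG ρ (l+1) := by
  rw [GG]
  calc GG ρ l ≤ 5 * GG ρ l := le_mul_of_one_le_left (zero_le) (by norm_num)
  _ ≤ _ := le_self_add

lemma FF_mono (ρ : ℕ) (l : ℕ) : FF ρ l ≤ FF ρ (l+1) := by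
  rw [FF]
  calc FF ρ l ≤ 3 * FF ρ l := le_mul_of_one_le_left (zero_le) (by norm_num)
  _ ≤ _ := le_self_add

lemma EE_le (ρ : ℕ) (l : ℕ) : EE ρ l ≤ 2 * FF ρ l + 4 * GG ρ l := by
  cases l with
  | zero => rw [EE]; exact zero_le
  | succ l =>
    rw [EE]
    exact add_le_add (mul_le_mul_right (FF_mono ρ l) 2)
      (mul_le_mul_right (GG_mono ρ l) 4)

lemma one_le_rho {η : ℝ≥0∞} {ρ : ℕ} (hρ : 8 + 8 * η⁻¹ ≤ (ρ:ℝ≥0∞)) : (1:ℝ≥0∞) ≤ (ρ:ℝ≥0∞) :=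
  le_trans (by norm_num) (le_trans (le_self_add (a := 8) (b := 8 * η⁻¹)) hρ)

/-- The key numeric inequality: the per-segment error is chargeable. -/
lemma CC_bound {η : ℝ≥0∞} {ρ : ℕ} (hη0 : η ≠ 0) (hηt : η ≠ ⊤)
    (hρ : 8 + 8 * η⁻¹ ≤ (ρ:ℝ≥0∞)) (l : ℕ) :
    EE ρ (l+1) + η ≤ η * (ρ:ℝ≥0∞)^l := by
  have hrho1 : (1:ℝ≥0∞) ≤ (ρ:ℝ≥0∞) := one_le_rho hρ
  have hmain : ∀ l, 2 * FF ρ l + 4 * GG ρ l + η ≤ η * (ρ:ℝ≥0∞)^l := by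
    intro l
    induction l with
    | zero => simp [FF, GG]
    | succ l ih =>
      have h1 : 2 * FF ρ l + 4 * GG ρ l ≤ η * (ρ:ℝ≥0∞)^l := le_trans le_self_add ih
      have hpow1 : (1:ℝ≥0∞) ≤ (ρ:ℝ≥0∞)^l := one_le_pow_of_one_le' hrho1 l
      have heta : η ≤ η * (ρ:ℝ≥0∞)^l := le_mul_of_one_le_right (zero_le) hpow1
      have hrhopow : ((ρ:ℝ≥0∞))^l ≤ η⁻¹ * (η * (ρ:ℝ≥0∞)^l) := by
        rw [← mul_assoc, ENNReal.inv_mul_cancel hη0 hηt, one_mul]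
      calc 2 * FF ρ (l+1) + 4 * GG ρ (l+1) + η
          = 6 * FF ρ l + (28 * GG ρ l + 8 * (ρ:ℝ≥0∞)^l + η) := by rw [FF, GG]; ring
      _ ≤ 14 * FF ρ l + (28 * GG ρ l + 8 * (ρ:ℝ≥0∞)^l + η) :=
            add_le_add_left (mul_le_mul_left (by norm_num) _) _
      _ = 7 * (2 * FF ρ l + 4 * GG ρ l) + 8 * (ρ:ℝ≥0∞)^l + η := by ring
      _ ≤ 7 * (η * (ρ:ℝ≥0∞)^l) + 8 * (ρ:ℝ≥0∞)^l + η * (ρ:ℝ≥0∞)^l :=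
            add_le_add (add_le_add_left (mul_le_mul_right h1 7) _) heta
      _ = 8 * (η * (ρ:ℝ≥0∞)^l) + 8 * (ρ:ℝ≥0∞)^l := by ring
      _ ≤ 8 * (η * (ρ:ℝ≥0∞)^l) + 8 * (η⁻¹ * (η * (ρ:ℝ≥0∞)^l)) :=
            add_le_add_right (mul_le_mul_right hrhopow 8) _
      _ = (8 + 8 * η⁻¹) * (η * (ρ:ℝ≥0∞)^l) := by ring
      _ ≤ (ρ:ℝ≥0∞) * (η * (ρ:ℝ≥0∞)^l) := mul_le_mul_left hρ _
      _ = η * (ρ:ℝ≥0∞)^(l+1) := by rw [pow_succ]; ring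
  calc EE ρ (l+1) + η = 2 * FF ρ l + 4 * GG ρ l + η := by rw [EE]
  _ ≤ η * (ρ:ℝ≥0∞)^l := hmain l

end March0


noncomputable def coefL (η : ℝ≥0∞) (l : ℕ) : ℝ≥0∞ := 1 + (l:ℝ≥0∞) * η

lemma coefL_mono (η : ℝ≥0∞) {l l' : ℕ} (h : l ≤ l') : coefL η l ≤ coefL η l' := by
  rw [coefL, coefL]
  exact add_le_add_right (mul_le_mul_left (Nat.cast_le.2 h) η) 1

lemma one_le_coefL (η : ℝ≥0∞) (l : ℕ) : 1 ≤ coefL η l := le_self_add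

section March

variable [Fintype V] [DecidableEq V]
variable (d : V → V → ℝ≥0∞) (sfun : ℕ → ℕ) (K : ℕ)
variable (hds : ∀ x y, d x y = d y x) (hdt : ∀ x y z, d x z ≤ d x y + d y z)
variable (hs1 : ∀ i, 1 ≤ sfun i) (hsmono : Monotone sfun)
variable (z : ℕ → V) (wt : ℕ → ℝ≥0∞) (m : ℕ) (W : ℝ≥0∞) (η : ℝ≥0∞) (ρ : ℕ)

lemma dH_symm (u v : V) : dH d sfun K hds hdt hs1 u v = dH d sfun K hds hdt hs1 v u :=
  gdist_symm (fun a b _ => hds a b)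

include hdt in
lemma d_chain (hd0 : ∀ x, d x x = 0) (hzd : ∀ t, t < m → d (z t) (z (t+1)) ≤ wt t)
    {p q : ℕ} (hpq : p ≤ q) (hq : q ≤ m) : d (z p) (z q) ≤ AW wt p q := by
  induction q with
  | zero =>
    have : p = 0 := Nat.le_zero.1 hpq
    subst this
    rw [AW_self, hd0]
  | succ q ih =>
    rcases Nat.eq_or_lt_of_le hpq with h | h
    · subst h
      rw [AW_self, hd0]
    · have hpq' : p ≤ q := Nat.lt_succ_iff.1 h
      have hq' : q ≤ m := le_of_lt (Nat.lt_of_lt_of_le (Nat.lt_succ_self q) hq)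
      calc d (z p) (z (q+1)) ≤ d (z p) (z q) + d (z q) (z (q+1)) := hdt _ _ _
      _ ≤ AW wt p q + wt q := add_le_add (ih hpq' hq')
            (hzd q (Nat.lt_of_lt_of_le (Nat.lt_succ_self q) hq))
      _ = AW wt p (q+1) := (AW_succ_right wt hpq').symm

/-- Jumpability of the level-`l` lifts of positions `p` and `q`. -/
def Jmp (l p q : ℕ) : Prop :=
  liftV d sfun K hds hdt hs1 l (z q) ∈ ballAt d sfun K hds hdt hs1 l (liftV d sfun K hds hdt hs1 l (z p)) ∨
  liftV d sfun K hds hdt hs1 l (z p) ∈ ballAt d sfun K hds hdt hs1 l (liftV d sfun K hds hdt hs1 l (z q)) ∨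
  liftV d sfun K hds hdt hs1 l (z p) = liftV d sfun K hds hdt hs1 l (z q)

lemma jmp_of_not_normal {l p q : ℕ} (hl : ¬ normalAt d sfun K hds hdt hs1 l) : Jmp d sfun K hds hdt hs1 z l p q := by
  left
  rw [frozen_ball d sfun K hds hdt hs1 hl]
  exact liftV_mem d sfun K hds hdt hs1 l (z q)

lemma dH_lift_le_of_jmp {l p q : ℕ} (hlK : l < K) (hj : Jmp d sfun K hds hdt hs1 z l p q) :
    dH d sfun K hds hdt hs1 (liftV d sfun K hds hdt hs1 l (z p)) (liftV d sfun K hds hdt hs1 l (z q)) ≤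
      d (liftV d sfun K hds hdt hs1 l (z p)) (liftV d sfun K hds hdt hs1 l (z q)) := by
  rcases hj with hj | hj | hj
  · exact dH_le_of_edge d sfun K hds hdt hs1 (ball_edge d sfun K hds hdt hs1 hlK (liftV_mem d sfun K hds hdt hs1 l (z p)) hj)
  · rw [dH_symm d sfun K hds hdt hs1, hds]
    exact dH_le_of_edge d sfun K hds hdt hs1 (ball_edge d sfun K hds hdt hs1 hlK (liftV_mem d sfun K hds hdt hs1 l (z q)) hj)
  · rw [hj, dH_self]
    exact zero_le

include hdt in
lemma cross_of_jmp (hd0 : ∀ x, d x x = 0) (hzd : ∀ t, t < m → d (z t) (z (t+1)) ≤ wt t)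
    {l p q : ℕ} (hlK : l < K) (hpq : p ≤ q) (hq : q ≤ m) (hj : Jmp d sfun K hds hdt hs1 z l p q) :
    dH d sfun K hds hdt hs1 (z p) (z q) ≤
      AW wt p q + 2 * kap d sfun K hds hdt hs1 l (z p) + 2 * kap d sfun K hds hdt hs1 l (z q) := by
  have h1 : dH d sfun K hds hdt hs1 (z p) (z q) ≤ dH d sfun K hds hdt hs1 (z p) (liftV d sfun K hds hdt hs1 l (z p)) +
      dH d sfun K hds hdt hs1 (liftV d sfun K hds hdt hs1 l (z p)) (liftV d sfun K hds hdt hs1 l (z q)) +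
      dH d sfun K hds hdt hs1 (liftV d sfun K hds hdt hs1 l (z q)) (z q) :=
    le_trans (dH_triangle d sfun K hds hdt hs1 _ (liftV d sfun K hds hdt hs1 l (z q)) _)
      (add_le_add_left (dH_triangle d sfun K hds hdt hs1 _ (liftV d sfun K hds hdt hs1 l (z p)) _) _)
  have h2 : d (liftV d sfun K hds hdt hs1 l (z p)) (liftV d sfun K hds hdt hs1 l (z q)) ≤
      kap d sfun K hds hdt hs1 l (z p) + AW wt p q + kap d sfun K hds hdt hs1 l (z q) := by
    calc d (liftV d sfun K hds hdt hs1 l (z p)) (liftV d sfun K hds hdt hs1 l (z q))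
        ≤ d (liftV d sfun K hds hdt hs1 l (z p)) (z q) + d (z q) (liftV d sfun K hds hdt hs1 l (z q)) := hdt _ _ _
    _ ≤ (d (liftV d sfun K hds hdt hs1 l (z p)) (z p) + d (z p) (z q)) + d (z q) (liftV d sfun K hds hdt hs1 l (z q)) :=
          add_le_add_left (hdt _ _ _) _
    _ ≤ (kap d sfun K hds hdt hs1 l (z p) + AW wt p q) + kap d sfun K hds hdt hs1 l (z q) := by
          refine add_le_add (add_le_add ?_ ?_) ?_
          · rw [hds]
            exact d_lift_le_kap d sfun K hds hdt hs1 hd0 l (z p)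
          · exact d_chain d hdt z wt m hd0 hzd hpq hq
          · exact d_lift_le_kap d sfun K hds hdt hs1 hd0 l (z q)
    _ = kap d sfun K hds hdt hs1 l (z p) + AW wt p q + kap d sfun K hds hdt hs1 l (z q) := rfl
  have hK' : l ≤ K := le_of_lt hlK
  calc dH d sfun K hds hdt hs1 (z p) (z q) ≤ dH d sfun K hds hdt hs1 (z p) (liftV d sfun K hds hdt hs1 l (z p)) +
      dH d sfun K hds hdt hs1 (liftV d sfun K hds hdt hs1 l (z p)) (liftV d sfun K hds hdt hs1 l (z q)) +
      dH d sfun K hds hdt hs1 (liftV d sfun K hds hdt hs1 l (z q)) (z q) := h1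
  _ ≤ kap d sfun K hds hdt hs1 l (z p) + (kap d sfun K hds hdt hs1 l (z p) + AW wt p q + kap d sfun K hds hdt hs1 l (z q)) +
      kap d sfun K hds hdt hs1 l (z q) := by
        refine add_le_add (add_le_add ?_ (le_trans (dH_lift_le_of_jmp d sfun K hds hdt hs1 z hlK hj) h2)) ?_
        · exact dH_lift_le_kap d sfun K hds hdt hs1 l (z p) hK'
        · rw [dH_symm d sfun K hds hdt hs1]
          exact dH_lift_le_kap d sfun K hds hdt hs1 l (z q) hK'
  _ = AW wt p q + 2 * kap d sfun K hds hdt hs1 l (z p) + 2 * kap d sfun K hds hdt hs1 l (z q) := by ring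

include hdt in
lemma kap_succ_of_not_jmp (hd0 : ∀ x, d x x = 0)
    (hzd : ∀ t, t < m → d (z t) (z (t+1)) ≤ wt t)
    {l p q : ℕ} (hn : normalAt d sfun K hds hdt hs1 l) (hpq : p ≤ q) (hq : q ≤ m)
    (hnj : ¬ Jmp d sfun K hds hdt hs1 z l p q)
    {κ δA : ℝ≥0∞} (hkp : kap d sfun K hds hdt hs1 l (z p) ≤ κ) (hkq : kap d sfun K hds hdt hs1 l (z q) ≤ κ)
    (hA : AW wt p q ≤ δA) :
    kap d sfun K hds hdt hs1 (l+1) (z p) ≤ 5 * κ + 2 * δA ∧ kap d sfun K hds hdt hs1 (l+1) (z q) ≤ 5 * κ + 2 * δA := by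
  rw [Jmp] at hnj
  push_neg at hnj
  obtain ⟨hnb1, hnb2, hne⟩ := hnj
  have hdl : d (liftV d sfun K hds hdt hs1 l (z p)) (liftV d sfun K hds hdt hs1 l (z q)) ≤ 2 * κ + δA := by
    calc d (liftV d sfun K hds hdt hs1 l (z p)) (liftV d sfun K hds hdt hs1 l (z q))
        ≤ d (liftV d sfun K hds hdt hs1 l (z p)) (z p) + d (z p) (z q) +
            d (z q) (liftV d sfun K hds hdt hs1 l (z q)) :=
          le_trans (hdt _ (z q) _) (add_le_add_left (hdt _ (z p) _) _)
    _ ≤ κ + δA + κ := by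
          refine add_le_add (add_le_add ?_ ?_) ?_
          · rw [hds]; exact le_trans (d_lift_le_kap d sfun K hds hdt hs1 hd0 l (z p)) hkp
          · exact le_trans (d_chain d hdt z wt m hd0 hzd hpq hq) hA
          · exact le_trans (d_lift_le_kap d sfun K hds hdt hs1 hd0 l (z q)) hkq
    _ = 2 * κ + δA := by ring
  constructor
  · rw [kap_succ, if_pos hn]
    have hrad : radAt d sfun K hds hdt hs1 l (liftV d sfun K hds hdt hs1 l (z p)) ≤ 2 * κ + δA :=
      le_trans (rad_le_of_not_ball d sfun K hds hdt hs1 hn _ (liftV_mem d sfun K hds hdt hs1 l (z q)) hnb1) hdl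
    calc kap d sfun K hds hdt hs1 l (z p) + 2 * radAt d sfun K hds hdt hs1 l (liftV d sfun K hds hdt hs1 l (z p))
        ≤ κ + 2 * (2 * κ + δA) := add_le_add hkp (mul_le_mul_right hrad 2)
    _ = 5 * κ + 2 * δA := by ring
  · rw [kap_succ, if_pos hn]
    have hdl' : d (liftV d sfun K hds hdt hs1 l (z q)) (liftV d sfun K hds hdt hs1 l (z p)) ≤ 2 * κ + δA := by
      rw [hds]; exact hdl
    have hrad : radAt d sfun K hds hdt hs1 l (liftV d sfun K hds hdt hs1 l (z q)) ≤ 2 * κ + δA :=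
      le_trans (rad_le_of_not_ball d sfun K hds hdt hs1 hn _ (liftV_mem d sfun K hds hdt hs1 l (z p)) hnb2) hdl'
    calc kap d sfun K hds hdt hs1 l (z q) + 2 * radAt d sfun K hds hdt hs1 l (liftV d sfun K hds hdt hs1 l (z q))
        ≤ κ + 2 * (2 * κ + δA) := add_le_add hkq (mul_le_mul_right hrad 2)
    _ = 5 * κ + 2 * δA := by ring

/-- The `Good` outcome: the segment is crossed with small error. -/
def GoodS (l a b : ℕ) : Prop :=
  dH d sfun K hds hdt hs1 (z a) (z b) ≤ coefL η l * AW wt a b + EE ρ l * W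

/-- The `Up` outcome: anchors near both ends that have climbed to level `l` cheaply. -/
def UpS (l a b : ℕ) : Prop :=
  ∃ p q : ℕ, a ≤ p ∧ p ≤ q ∧ q ≤ b ∧
    kap d sfun K hds hdt hs1 l (z p) ≤ GG ρ l * W ∧ kap d sfun K hds hdt hs1 l (z q) ≤ GG ρ l * W ∧
    dH d sfun K hds hdt hs1 (z a) (z p) ≤ coefL η l * AW wt a p + FF ρ l * W ∧
    dH d sfun K hds hdt hs1 (z q) (z b) ≤ coefL η l * AW wt q b + FF ρ l * W

def ClaimS (l : ℕ) : Prop :=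
  ∀ a b : ℕ, a ≤ b → b ≤ m → GoodS d sfun K hds hdt hs1 z wt W η ρ l a b ∨ UpS d sfun K hds hdt hs1 z wt W η ρ l a b

lemma claim_zero : ClaimS d sfun K hds hdt hs1 z wt m W η ρ 0 := by
  intro a b hab hbm
  right
  refine ⟨a, b, le_refl a, hab, le_refl b, ?_, ?_, ?_, ?_⟩
  · rw [kap_zero]; exact zero_le
  · rw [kap_zero]; exact zero_le
  · rw [dH_self, AW_self]; exact zero_le
  · rw [dH_self, AW_self]; exact zero_le


lemma coefL_succ (η : ℝ≥0∞) (l : ℕ) : coefL η (l+1) = coefL η l + η := by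
  rw [coefL, coefL]
  push_cast
  ring

lemma FF_succ_eq (ρ : ℕ) (l : ℕ) : FF ρ (l+1) = FF ρ l + EE ρ (l+1) := by
  rw [FF, EE]
  ring

include hds hdt in
lemma claim_step (hd0 : ∀ x, d x x = 0) (hzd : ∀ t, t < m → d (z t) (z (t+1)) ≤ wt t)
    (hwW : ∀ t, t < m → wt t ≤ W) (hWt : W ≠ ⊤)
    (hη0 : η ≠ 0) (hηt : η ≠ ⊤) (hρ : 8 + 8 * η⁻¹ ≤ (ρ:ℝ≥0∞))
    {l : ℕ} (hlK : l < K) (IH : ClaimS d sfun K hds hdt hs1 z wt m W η ρ l) :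
    ClaimS d sfun K hds hdt hs1 z wt m W η ρ (l+1) := by
  have hrho1 : (1:ℝ≥0∞) ≤ (ρ:ℝ≥0∞) := one_le_rho hρ
  have hpow1 : (1:ℝ≥0∞) ≤ (ρ:ℝ≥0∞)^l := one_le_pow_of_one_le' hrho1 l
  -- the segment dichotomy: within one scale-`l` segment, either cross or produce
  -- level-`l+1` anchors
  have seg : ∀ x y, x ≤ y → y ≤ m → AW wt x y ≤ (ρ:ℝ≥0∞)^l * W →
      (dH d sfun K hds hdt hs1 (z x) (z y) ≤ coefL η l * AW wt x y + EE ρ (l+1) * W) ∨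
      (∃ p q, x ≤ p ∧ p ≤ q ∧ q ≤ y ∧
        kap d sfun K hds hdt hs1 (l+1) (z p) ≤ GG ρ (l+1) * W ∧
        kap d sfun K hds hdt hs1 (l+1) (z q) ≤ GG ρ (l+1) * W ∧
        dH d sfun K hds hdt hs1 (z x) (z p) ≤ coefL η l * AW wt x p + FF ρ l * W ∧
        dH d sfun K hds hdt hs1 (z q) (z y) ≤ coefL η l * AW wt q y + FF ρ l * W) := by
    intro x y hxy hym hA
    rcases IH x y hxy hym with hG | ⟨p, q, hxp, hpq, hqy, hkp, hkq, hLp, hRq⟩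
    · left
      exact le_trans hG (add_le_add_right (mul_le_mul_left (EE_le ρ l) W) _)
    · by_cases hj : Jmp d sfun K hds hdt hs1 z l p q
      · left
        have hqm : q ≤ m := le_trans hqy hym
        have hcross := cross_of_jmp d sfun K hds hdt hs1 z wt m hd0 hzd hlK hpq hqm hj
        calc dH d sfun K hds hdt hs1 (z x) (z y)
            ≤ dH d sfun K hds hdt hs1 (z x) (z p) + dH d sfun K hds hdt hs1 (z p) (z q) + dH d sfun K hds hdt hs1 (z q) (z y) :=
              le_trans (dH_triangle d sfun K hds hdt hs1 _ (z q) _)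
                (add_le_add_left (dH_triangle d sfun K hds hdt hs1 _ (z p) _) _)
        _ ≤ (coefL η l * AW wt x p + FF ρ l * W) +
              (AW wt p q + 2 * kap d sfun K hds hdt hs1 l (z p) + 2 * kap d sfun K hds hdt hs1 l (z q)) +
              (coefL η l * AW wt q y + FF ρ l * W) := by
              exact add_le_add (add_le_add hLp hcross) hRq
        _ ≤ (coefL η l * AW wt x p + FF ρ l * W) +
              (coefL η l * AW wt p q + (2 * (GG ρ l * W) + 2 * (GG ρ l * W))) +
              (coefL η l * AW wt q y + FF ρ l * W) := by
              refine add_le_add (add_le_add_right ?_ _) le_rfl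
              rw [add_assoc]
              refine add_le_add ?_ ?_
              · exact le_mul_of_one_le_left (zero_le) (one_le_coefL η l)
              · exact add_le_add (mul_le_mul_right hkp 2) (mul_le_mul_right hkq 2)
        _ = coefL η l * (AW wt x p + AW wt p q + AW wt q y) +
              (2 * FF ρ l + 4 * GG ρ l) * W := by ring
        _ = coefL η l * AW wt x y + EE ρ (l+1) * W := by
              rw [AW_add wt hxp hpq, AW_add wt (le_trans hxp hpq) hqy, EE]
      · right
        have hn : normalAt d sfun K hds hdt hs1 l := by
          by_contra hnn
          exact hj (jmp_of_not_normal d sfun K hds hdt hs1 z hnn)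
        have hApq : AW wt p q ≤ (ρ:ℝ≥0∞)^l * W :=
          le_trans (AW_mono wt hxp hpq hqy) hA
        have hk2 := kap_succ_of_not_jmp d sfun K hds hdt hs1 z wt m hd0 hzd hn hpq (le_trans hqy hym)
          hj hkp hkq hApq
        have hGsucc : 5 * (GG ρ l * W) + 2 * ((ρ:ℝ≥0∞)^l * W) = GG ρ (l+1) * W := by
          rw [GG]; ring
        exact ⟨p, q, hxp, hpq, hqy, by rw [← hGsucc]; exact hk2.1,
          by rw [← hGsucc]; exact hk2.2, hLp, hRq⟩
  -- main strong induction on b - a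
  have main : ∀ n a b, a ≤ b → b ≤ m → b - a ≤ n →
      GoodS d sfun K hds hdt hs1 z wt W η ρ (l+1) a b ∨ UpS d sfun K hds hdt hs1 z wt W η ρ (l+1) a b := by
    intro n
    induction n with
    | zero =>
      intro a b hab hbm hsz
      have : a = b := by omega
      subst this
      left
      rw [GoodS, dH_self, AW_self]
      exact zero_le
    | succ n ihn =>
      intro a b hab hbm hsz
      by_cases hsingle : AW wt a b ≤ (ρ:ℝ≥0∞)^l * W
      · rcases seg a b hab hbm hsingle with hG | ⟨p, q, hp, hpq, hq, hkp, hkq, hLp, hRq⟩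
        · left
          rw [GoodS]
          exact le_trans hG (add_le_add_left
            (mul_le_mul_left (coefL_mono η (Nat.le_succ l)) _) _)
        · right
          exact ⟨p, q, hp, hpq, hq, hkp, hkq,
            le_trans hLp (add_le_add (mul_le_mul_left (coefL_mono η (Nat.le_succ l)) _)
              (mul_le_mul_left (FF_mono ρ l) _)),
            le_trans hRq (add_le_add (mul_le_mul_left (coefL_mono η (Nat.le_succ l)) _)
              (mul_le_mul_left (FF_mono ρ l) _))⟩
      · -- multi-segment case
        have hane : a ∈ (Finset.Icc a b).filter (fun t => AW wt a t ≤ (ρ:ℝ≥0∞)^l * W) := by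
          rw [Finset.mem_filter, Finset.mem_Icc]
          exact ⟨⟨le_refl a, hab⟩, by rw [AW_self]; exact zero_le⟩
        set T := (Finset.Icc a b).filter (fun t => AW wt a t ≤ (ρ:ℝ≥0∞)^l * W) with hT
        set t' := T.max' ⟨a, hane⟩ with ht'
        have ht'mem : t' ∈ T := T.max'_mem ⟨a, hane⟩
        have ht'prop : (a ≤ t' ∧ t' ≤ b) ∧ AW wt a t' ≤ (ρ:ℝ≥0∞)^l * W := by
          have := ht'mem
          rw [hT, Finset.mem_filter, Finset.mem_Icc] at this
          exact this
        have ht'max : ∀ u ∈ T, u ≤ t' := fun u hu => T.le_max' u hu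
        have hab' : a < b := by
          rcases Nat.eq_or_lt_of_le hab with h | h
          · exfalso; apply hsingle; subst h; rw [AW_self]; exact zero_le
          · exact h
        have htb : t' < b := by
          rcases Nat.eq_or_lt_of_le ht'prop.1.2 with h | h
          · exfalso; apply hsingle; rw [← h]; exact ht'prop.2
          · exact h
        have hat' : a < t' := by
          have haw : AW wt a (a+1) ≤ (ρ:ℝ≥0∞)^l * W := by
            rw [AW_succ_right wt (le_refl a), AW_self, zero_add]
            calc wt a ≤ W := hwW a (lt_of_lt_of_le hab' hbm)
            _ = 1 * W := (one_mul W).symm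
            _ ≤ (ρ:ℝ≥0∞)^l * W := mul_le_mul_left hpow1 W
          have : a + 1 ∈ T := by
            rw [hT, Finset.mem_filter, Finset.mem_Icc]
            exact ⟨⟨Nat.le_succ a, hab'⟩, haw⟩
          exact lt_of_lt_of_le (Nat.lt_succ_self a) (ht'max _ this)
        have hfull : (ρ:ℝ≥0∞)^l * W < AW wt a (t'+1) := by
          by_contra hc
          push_neg at hc
          have : t' + 1 ∈ T := by
            rw [hT, Finset.mem_filter, Finset.mem_Icc]
            exact ⟨⟨le_trans (le_of_lt hat') (Nat.le_succ t'), htb⟩, hc⟩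
          exact absurd (ht'max _ this) (by omega)
        -- the charging inequality
        have hcharge : EE ρ (l+1) * W ≤ η * AW wt a t' := by
          have h2 : (ρ:ℝ≥0∞)^l * W ≤ AW wt a t' + W := by
            refine le_trans (le_of_lt hfull) ?_
            rw [AW_succ_right wt (le_of_lt hat')]
            exact add_le_add_right (hwW t' (lt_of_lt_of_le htb hbm)) _
          have h3 : EE ρ (l+1) * W + η * W ≤ η * AW wt a t' + η * W := by
            calc EE ρ (l+1) * W + η * W = (EE ρ (l+1) + η) * W := by ring
            _ ≤ (η * (ρ:ℝ≥0∞)^l) * W := mul_le_mul_left (CC_bound hη0 hηt hρ l) W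
            _ = η * ((ρ:ℝ≥0∞)^l * W) := by ring
            _ ≤ η * (AW wt a t' + W) := mul_le_mul_right h2 η
            _ = η * AW wt a t' + η * W := by ring
          exact (ENNReal.add_le_add_iff_right (ENNReal.mul_ne_top hηt hWt)).1 h3
        have hrest := ihn t' b (le_of_lt htb) hbm (by omega)
        have ht'm : t' ≤ m := le_trans (le_of_lt htb) hbm
        rcases seg a t' (le_of_lt hat') ht'm ht'prop.2 with
            hsegG | ⟨p, q, hp, hpq, hq, hkp, hkq, hLp, hRq⟩
        · -- the first segment is crossable, with charged cost
          have hcross : dH d sfun K hds hdt hs1 (z a) (z t') ≤ coefL η (l+1) * AW wt a t' := by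
            calc dH d sfun K hds hdt hs1 (z a) (z t')
                ≤ coefL η l * AW wt a t' + EE ρ (l+1) * W := hsegG
            _ ≤ coefL η l * AW wt a t' + η * AW wt a t' := add_le_add_right hcharge _
            _ = (coefL η l + η) * AW wt a t' := by ring
            _ = coefL η (l+1) * AW wt a t' := by rw [coefL_succ]
          rcases hrest with hrG | ⟨p, q, hp, hpq, hq, hkp, hkq, hLp, hRq⟩
          · left
            rw [GoodS]
            calc dH d sfun K hds hdt hs1 (z a) (z b)
                ≤ dH d sfun K hds hdt hs1 (z a) (z t') + dH d sfun K hds hdt hs1 (z t') (z b) := dH_triangle d sfun K hds hdt hs1 _ _ _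
            _ ≤ coefL η (l+1) * AW wt a t' +
                  (coefL η (l+1) * AW wt t' b + EE ρ (l+1) * W) := add_le_add hcross hrG
            _ = coefL η (l+1) * (AW wt a t' + AW wt t' b) + EE ρ (l+1) * W := by ring
            _ = coefL η (l+1) * AW wt a b + EE ρ (l+1) * W := by
                  rw [AW_add wt (le_of_lt hat') (le_of_lt htb)]
          · right
            refine ⟨p, q, le_trans (le_of_lt hat') hp, hpq, hq, hkp, hkq, ?_, hRq⟩
            calc dH d sfun K hds hdt hs1 (z a) (z p)
                ≤ dH d sfun K hds hdt hs1 (z a) (z t') + dH d sfun K hds hdt hs1 (z t') (z p) := dH_triangle d sfun K hds hdt hs1 _ _ _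
            _ ≤ coefL η (l+1) * AW wt a t' +
                  (coefL η (l+1) * AW wt t' p + FF ρ (l+1) * W) := add_le_add hcross hLp
            _ = coefL η (l+1) * (AW wt a t' + AW wt t' p) + FF ρ (l+1) * W := by ring
            _ = coefL η (l+1) * AW wt a p + FF ρ (l+1) * W := by
                  rw [AW_add wt (le_of_lt hat') hp]
        · -- the first segment yields level-(l+1) anchors p ≤ q in [a,t']
          rcases hrest with hrG | ⟨p2, q2, hp2, hpq2, hq2, hkp2, hkq2, hLp2, hRq2⟩
          · right
            refine ⟨p, q, hp, hpq, le_trans hq (le_of_lt htb), hkp, hkq, ?_, ?_⟩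
            · exact le_trans hLp (add_le_add
                (mul_le_mul_left (coefL_mono η (Nat.le_succ l)) _)
                (mul_le_mul_left (FF_mono ρ l) _))
            · calc dH d sfun K hds hdt hs1 (z q) (z b)
                  ≤ dH d sfun K hds hdt hs1 (z q) (z t') + dH d sfun K hds hdt hs1 (z t') (z b) := dH_triangle d sfun K hds hdt hs1 _ _ _
              _ ≤ (coefL η l * AW wt q t' + FF ρ l * W) +
                    (coefL η (l+1) * AW wt t' b + EE ρ (l+1) * W) := add_le_add hRq hrG
              _ ≤ coefL η (l+1) * (AW wt q t' + AW wt t' b) +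
                    (FF ρ l + EE ρ (l+1)) * W := by
                    calc (coefL η l * AW wt q t' + FF ρ l * W) +
                        (coefL η (l+1) * AW wt t' b + EE ρ (l+1) * W)
                        = (coefL η l * AW wt q t' + coefL η (l+1) * AW wt t' b) +
                          (FF ρ l + EE ρ (l+1)) * W := by ring
                    _ ≤ (coefL η (l+1) * AW wt q t' + coefL η (l+1) * AW wt t' b) +
                          (FF ρ l + EE ρ (l+1)) * W := by
                          exact add_le_add_left (add_le_add_left
                            (mul_le_mul_left (coefL_mono η (Nat.le_succ l)) _) _) _
                    _ = coefL η (l+1) * (AW wt q t' + AW wt t' b) +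
                          (FF ρ l + EE ρ (l+1)) * W := by ring
              _ = coefL η (l+1) * AW wt q b + FF ρ (l+1) * W := by
                    rw [AW_add wt hq (le_of_lt htb), FF_succ_eq]
          · right
            have hpq2' : p ≤ q2 :=
              le_trans (le_trans hpq hq) (le_trans hp2 hpq2)
            refine ⟨p, q2, hp, hpq2', hq2, hkp, hkq2, ?_, hRq2⟩
            · exact le_trans hLp (add_le_add
                (mul_le_mul_left (coefL_mono η (Nat.le_succ l)) _)
                (mul_le_mul_left (FF_mono ρ l) _))
  intro a b hab hbm
  exact main (b - a) a b hab hbm le_rfl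


include hdt hsmono in
lemma top_cross (hd0 : ∀ x, d x x = 0) (hzd : ∀ t, t < m → d (z t) (z (t+1)) ≤ wt t)
    {p q : ℕ} (hpq : p ≤ q) (hq : q ≤ m) :
    dH d sfun K hds hdt hs1 (z p) (z q) ≤
      AW wt p q + 2 * kap d sfun K hds hdt hs1 K (z p) + 2 * kap d sfun K hds hdt hs1 K (z q) := by
  have hlev : ∀ v : V, liftV d sfun K hds hdt hs1 K v ∈ lev d sfun K hds hdt hs1 (stopL d sfun K hds hdt hs1) := by
    intro v
    have h1 := liftV_mem d sfun K hds hdt hs1 K v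
    have hsm : Monotone sfun := hsmono
    rwa [(lev_frozen d sfun K hds hdt hs1 hsmono K (stop_le d sfun K hds hdt hs1)).1] at h1
  have hjump : dH d sfun K hds hdt hs1 (liftV d sfun K hds hdt hs1 K (z p)) (liftV d sfun K hds hdt hs1 K (z q)) ≤
      d (liftV d sfun K hds hdt hs1 K (z p)) (liftV d sfun K hds hdt hs1 K (z q)) :=
    dH_le_of_edge d sfun K hds hdt hs1 (top_edge d sfun K hds hdt hs1 (hlev (z p)) (hlev (z q)))
  have h2 : d (liftV d sfun K hds hdt hs1 K (z p)) (liftV d sfun K hds hdt hs1 K (z q)) ≤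
      kap d sfun K hds hdt hs1 K (z p) + AW wt p q + kap d sfun K hds hdt hs1 K (z q) := by
    calc d (liftV d sfun K hds hdt hs1 K (z p)) (liftV d sfun K hds hdt hs1 K (z q))
        ≤ d (liftV d sfun K hds hdt hs1 K (z p)) (z p) + d (z p) (z q) + d (z q) (liftV d sfun K hds hdt hs1 K (z q)) :=
          le_trans (hdt _ (z q) _) (add_le_add_left (hdt _ (z p) _) _)
    _ ≤ kap d sfun K hds hdt hs1 K (z p) + AW wt p q + kap d sfun K hds hdt hs1 K (z q) := by
          refine add_le_add (add_le_add ?_ ?_) ?_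
          · rw [hds]; exact d_lift_le_kap d sfun K hds hdt hs1 hd0 K (z p)
          · exact d_chain d hdt z wt m hd0 hzd hpq hq
          · exact d_lift_le_kap d sfun K hds hdt hs1 hd0 K (z q)
  calc dH d sfun K hds hdt hs1 (z p) (z q)
      ≤ dH d sfun K hds hdt hs1 (z p) (liftV d sfun K hds hdt hs1 K (z p)) +
        dH d sfun K hds hdt hs1 (liftV d sfun K hds hdt hs1 K (z p)) (liftV d sfun K hds hdt hs1 K (z q)) +
        dH d sfun K hds hdt hs1 (liftV d sfun K hds hdt hs1 K (z q)) (z q) :=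
        le_trans (dH_triangle d sfun K hds hdt hs1 _ (liftV d sfun K hds hdt hs1 K (z q)) _)
          (add_le_add_left (dH_triangle d sfun K hds hdt hs1 _ (liftV d sfun K hds hdt hs1 K (z p)) _) _)
  _ ≤ kap d sfun K hds hdt hs1 K (z p) + (kap d sfun K hds hdt hs1 K (z p) + AW wt p q + kap d sfun K hds hdt hs1 K (z q)) +
        kap d sfun K hds hdt hs1 K (z q) := by
        refine add_le_add (add_le_add ?_ (le_trans hjump h2)) ?_
        · exact dH_lift_le_kap d sfun K hds hdt hs1 K (z p) (le_refl K)
        · rw [dH_symm d sfun K hds hdt hs1]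
          exact dH_lift_le_kap d sfun K hds hdt hs1 K (z q) (le_refl K)
  _ = AW wt p q + 2 * kap d sfun K hds hdt hs1 K (z p) + 2 * kap d sfun K hds hdt hs1 K (z q) := by ring

include hds hdt hsmono in
/-- Main abstract bound: the emulator distance between the endpoints of any weight-bounded
chain is at most `(1 + Kη)` times the total weight plus `O(ρ^K)` times the maximum weight. -/
lemma march_main (hd0 : ∀ x, d x x = 0) (hzd : ∀ t, t < m → d (z t) (z (t+1)) ≤ wt t)
    (hwW : ∀ t, t < m → wt t ≤ W) (hWt : W ≠ ⊤)
    (hη0 : η ≠ 0) (hηt : η ≠ ⊤) (hρ : 8 + 8 * η⁻¹ ≤ (ρ:ℝ≥0∞)) :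
    dH d sfun K hds hdt hs1 (z 0) (z m) ≤
      coefL η K * AW wt 0 m + (EE ρ K + (2 * FF ρ K + 4 * GG ρ K)) * W := by
  have hall : ∀ l, l ≤ K → ClaimS d sfun K hds hdt hs1 z wt m W η ρ l := by
    intro l
    induction l with
    | zero => intro _; exact claim_zero d sfun K hds hdt hs1 z wt m W η ρ
    | succ l ih =>
      intro hl
      exact claim_step d sfun K hds hdt hs1 z wt m W η ρ hd0 hzd hwW hWt hη0 hηt hρ
        (Nat.lt_of_succ_le hl) (ih (le_of_lt (Nat.lt_of_succ_le hl)))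
  rcases hall K (le_refl K) 0 m (Nat.zero_le m) (le_refl m) with hG | ⟨p, q, hp, hpq, hq, hkp, hkq, hLp, hRq⟩
  · refine le_trans hG ?_
    exact add_le_add_right (mul_le_mul_left le_self_add W) _
  · have hcross := top_cross d sfun K hds hdt hs1 hsmono z wt m hd0 hzd hpq hq
    calc dH d sfun K hds hdt hs1 (z 0) (z m)
        ≤ dH d sfun K hds hdt hs1 (z 0) (z p) + dH d sfun K hds hdt hs1 (z p) (z q) + dH d sfun K hds hdt hs1 (z q) (z m) :=
          le_trans (dH_triangle d sfun K hds hdt hs1 _ (z q) _)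
            (add_le_add_left (dH_triangle d sfun K hds hdt hs1 _ (z p) _) _)
    _ ≤ (coefL η K * AW wt 0 p + FF ρ K * W) +
          (AW wt p q + 2 * kap d sfun K hds hdt hs1 K (z p) + 2 * kap d sfun K hds hdt hs1 K (z q)) +
          (coefL η K * AW wt q m + FF ρ K * W) := add_le_add (add_le_add hLp hcross) hRq
    _ ≤ (coefL η K * AW wt 0 p + FF ρ K * W) +
          (coefL η K * AW wt p q + (2 * (GG ρ K * W) + 2 * (GG ρ K * W))) +
          (coefL η K * AW wt q m + FF ρ K * W) := by
          refine add_le_add (add_le_add_right ?_ _) le_rfl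
          rw [add_assoc]
          refine add_le_add ?_ ?_
          · exact le_mul_of_one_le_left (zero_le) (one_le_coefL η K)
          · exact add_le_add (mul_le_mul_right hkp 2) (mul_le_mul_right hkq 2)
    _ = coefL η K * (AW wt 0 p + AW wt p q + AW wt q m) + (2 * FF ρ K + 4 * GG ρ K) * W := by
          ring
    _ = coefL η K * AW wt 0 m + (2 * FF ρ K + 4 * GG ρ K) * W := by
          rw [AW_add wt hp hpq, AW_add wt (le_trans hp hpq) hq]
    _ ≤ coefL η K * AW wt 0 m + (EE ρ K + (2 * FF ρ K + 4 * GG ρ K)) * W := by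
          exact add_le_add_right (mul_le_mul_left le_add_self W) _

end March


section Count

variable [Fintype V] [DecidableEq V]
variable (d : V → V → ℝ≥0∞) (sfun : ℕ → ℕ) (K : ℕ)
variable (hds : ∀ x y, d x y = d y x) (hdt : ∀ x y z, d x z ≤ d x y + d y z)
variable (hs1 : ∀ i, 1 ≤ sfun i) (hsmono : Monotone sfun)

include hsmono in
lemma edgesF_subset :
    edgesF d sfun K hds hdt hs1 ⊆
      ((Finset.range (stopL d sfun K hds hdt hs1)).biUnion fun i =>
        (lev d sfun K hds hdt hs1 i).biUnion fun u =>
          ((ballAt d sfun K hds hdt hs1 i u).image fun v => s(u,v)) ∪ {s(u, ctrAt d sfun K hds hdt hs1 i u)}) ∪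
      ((lev d sfun K hds hdt hs1 (stopL d sfun K hds hdt hs1)).biUnion fun u =>
        (lev d sfun K hds hdt hs1 (stopL d sfun K hds hdt hs1)).image fun v => s(u,v)) := by
  intro e he
  rw [edgesF, Finset.mem_union] at he
  rcases he with he | he
  · rw [Finset.mem_biUnion] at he
    obtain ⟨i, hi, hiu⟩ := he
    rw [Finset.mem_range] at hi
    by_cases hstop : i < stopL d sfun K hds hdt hs1
    · rw [Finset.mem_union]
      left
      rw [Finset.mem_biUnion]
      exact ⟨i, Finset.mem_range.2 hstop, hiu⟩
    · -- frozen level: these edges are inside the complete graph on `lev stop`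
      rw [Finset.mem_union]
      right
      push_neg at hstop
      obtain ⟨hlev, hnorm⟩ := lev_frozen d sfun K hds hdt hs1 hsmono i hstop
      rw [Finset.mem_biUnion] at hiu
      obtain ⟨u, hu, hue⟩ := hiu
      rw [Finset.mem_union] at hue
      have humem : u ∈ lev d sfun K hds hdt hs1 (stopL d sfun K hds hdt hs1) := by rwa [hlev] at hu
      rcases hue with hue | hue
      · rw [Finset.mem_image] at hue
        obtain ⟨v, hv, rfl⟩ := hue
        rw [frozen_ball d sfun K hds hdt hs1 hnorm, hlev] at hv
        rw [Finset.mem_biUnion]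
        exact ⟨u, humem, Finset.mem_image_of_mem _ hv⟩
      · rw [Finset.mem_singleton] at hue
        subst hue
        rw [frozen_ctr d sfun K hds hdt hs1 hnorm]
        rw [Finset.mem_biUnion]
        exact ⟨u, humem, Finset.mem_image_of_mem _ humem⟩
  · rw [Finset.mem_union]
    right
    exact he

include hsmono in
lemma edgesF_card_le :
    (edgesF d sfun K hds hdt hs1).card ≤
      (∑ i ∈ Finset.range (stopL d sfun K hds hdt hs1), (lev d sfun K hds hdt hs1 i).card * (sfun i + 1)) +
      (lev d sfun K hds hdt hs1 (stopL d sfun K hds hdt hs1)).card * (lev d sfun K hds hdt hs1 (stopL d sfun K hds hdt hs1)).card := by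
  refine le_trans (Finset.card_le_card (edgesF_subset d sfun K hds hdt hs1 hsmono)) ?_
  refine le_trans (Finset.card_union_le _ _) ?_
  refine add_le_add ?_ ?_
  · refine le_trans (Finset.card_biUnion_le) ?_
    refine Finset.sum_le_sum fun i hi => ?_
    refine le_trans (Finset.card_biUnion_le) ?_
    have : ∀ u ∈ lev d sfun K hds hdt hs1 i,
        (((ballAt d sfun K hds hdt hs1 i u).image fun v => s(u,v)) ∪ {s(u, ctrAt d sfun K hds hdt hs1 i u)}).card ≤
          sfun i + 1 := by
      intro u hu
      refine le_trans (Finset.card_union_le _ _) ?_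
      rw [Finset.mem_range] at hi
      have hnorm : normalAt d sfun K hds hdt hs1 i := normal_of_lt_stop d sfun K hds hdt hs1 hi
      refine add_le_add ?_ ?_
      · refine le_trans (Finset.card_image_le) ?_
        rw [ball_card_lev d sfun K hds hdt hs1 hnorm]
      · rw [Finset.card_singleton]
    calc (∑ u ∈ lev d sfun K hds hdt hs1 i,
          (((ballAt d sfun K hds hdt hs1 i u).image fun v => s(u,v)) ∪ {s(u, ctrAt d sfun K hds hdt hs1 i u)}).card)
        ≤ ∑ _u ∈ lev d sfun K hds hdt hs1 i, (sfun i + 1) := Finset.sum_le_sum this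
    _ = (lev d sfun K hds hdt hs1 i).card * (sfun i + 1) := by rw [Finset.sum_const, smul_eq_mul]
  · refine le_trans (Finset.card_biUnion_le) ?_
    calc (∑ u ∈ lev d sfun K hds hdt hs1 (stopL d sfun K hds hdt hs1),
          ((lev d sfun K hds hdt hs1 (stopL d sfun K hds hdt hs1)).image fun v => s(u,v)).card)
        ≤ ∑ _u ∈ lev d sfun K hds hdt hs1 (stopL d sfun K hds hdt hs1), (lev d sfun K hds hdt hs1 (stopL d sfun K hds hdt hs1)).card :=
          Finset.sum_le_sum fun u _ => Finset.card_image_le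
    _ = _ := by rw [Finset.sum_const, smul_eq_mul]

lemma levcard_mul : ∀ i, i ≤ stopL d sfun K hds hdt hs1 →
    (lev d sfun K hds hdt hs1 i).card * (∏ j ∈ Finset.range i, sfun j) ≤ Fintype.card V := by
  intro i
  induction i with
  | zero =>
    intro _
    rw [Finset.range_zero, Finset.prod_empty, mul_one]
    exact Finset.card_le_univ _
  | succ i ih =>
    intro hi
    have hnorm : normalAt d sfun K hds hdt hs1 i := normal_of_lt_stop d sfun K hds hdt hs1 (Nat.lt_of_succ_le hi)
    have h1 := lev_succ_card d sfun K hds hdt hs1 hnorm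
    calc (lev d sfun K hds hdt hs1 (i+1)).card * (∏ j ∈ Finset.range (i+1), sfun j)
        = ((lev d sfun K hds hdt hs1 (i+1)).card * sfun i) * (∏ j ∈ Finset.range i, sfun j) := by
          rw [Finset.prod_range_succ]; ring
    _ ≤ (lev d sfun K hds hdt hs1 i).card * (∏ j ∈ Finset.range i, sfun j) :=
          Nat.mul_le_mul_right _ h1
    _ ≤ Fintype.card V := ih (le_of_lt (Nat.lt_of_succ_le hi))

include hsmono in
lemma levcard_le_sfun_of_stop_lt (h : stopL d sfun K hds hdt hs1 < K) :
    (lev d sfun K hds hdt hs1 (stopL d sfun K hds hdt hs1)).card ≤ sfun (stopL d sfun K hds hdt hs1) := by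
  have := not_normal_stop d sfun K hds hdt hs1
  rw [normalAt, not_and_or] at this
  rcases this with hcard | hK
  · exact le_of_not_gt hcard
  · exact absurd h hK

end Count


section Numeric

lemma natexp_ineq : ∀ i : ℕ, 2 * i ≤ 3 + (∑ j ∈ Finset.range i, j) := by
  intro i
  induction i with
  | zero => simp
  | succ i ih =>
    rw [Finset.sum_range_succ]
    rcases Nat.lt_or_ge i 2 with h | h
    · interval_cases i <;> simp
    · omega

lemma pow_half_bound (i : ℕ) :
    (2:ℝ)^i * (2:ℝ)^i ≤ 8 * 2^(∑ j ∈ Finset.range i, j) := by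
  have h := natexp_ineq i
  calc (2:ℝ)^i * 2^i = 2^(2*i) := by rw [two_mul, pow_add]
  _ ≤ 2^(3 + ∑ j ∈ Finset.range i, j) := pow_le_pow_right₀ (by norm_num) h
  _ = 8 * 2^(∑ j ∈ Finset.range i, j) := by rw [pow_add]; norm_num

lemma rpow_prod_sum (x : ℝ) (hx : 0 < x) (s : Finset ℕ) (f : ℕ → ℝ) :
    x ^ (∑ i ∈ s, f i) = ∏ i ∈ s, x ^ (f i) := by
  classical
  induction s using Finset.cons_induction with
  | empty => simp
  | cons a t ha ih => rw [Finset.sum_cons, Finset.prod_cons, Real.rpow_add hx, ih]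

lemma geom_half_le (nn : ℕ) : ∑ i ∈ Finset.range nn, ((2:ℝ)⁻¹)^i ≤ 2 := by
  have h := geom_sum_eq (by norm_num : ((2:ℝ)⁻¹) ≠ 1) nn
  rw [h]
  have h1 : (0:ℝ) ≤ ((2:ℝ)⁻¹)^nn := by positivity
  have h2 : ((2:ℝ)⁻¹ - 1) = -(1/2) := by norm_num
  rw [h2, div_neg, div_div_eq_mul_div, neg_le]
  nlinarith

/-- scale exponent -/
noncomputable def nuR (k : ℕ) : ℝ := 1 / ((2:ℝ)^k - 1)

/-- ideal (real) level sizes -/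
noncomputable def svalR (n k : ℕ) (i : ℕ) : ℝ := 2^i * (n:ℝ) ^ ((2:ℝ)^i * nuR k)

/-- actual (integer) level sizes -/
noncomputable def sfunG (n k : ℕ) : ℕ → ℕ := fun i => ⌈svalR n k i⌉₊

variable {n k : ℕ} (hk : 2 ≤ k) (hn : 1 ≤ n)

include hk in
lemma twopow_sub_one_pos : (0:ℝ) < (2:ℝ)^k - 1 := by
  have : (2:ℝ)^2 ≤ (2:ℝ)^k := pow_le_pow_right₀ (by norm_num) hk
  norm_num at this ⊢
  linarith

include hk in
lemma nuR_pos : 0 < nuR k := by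
  rw [nuR]
  exact div_pos one_pos (twopow_sub_one_pos hk)

include hk in
lemma nuR_mul : ((2:ℝ)^k - 1) * nuR k = 1 := by
  rw [nuR]
  rw [mul_one_div, div_self (ne_of_gt (twopow_sub_one_pos hk))]

include hk hn in
lemma svalR_one_le (i : ℕ) : 1 ≤ svalR n k i := by
  rw [svalR]
  have h1 : (1:ℝ) ≤ 2^i := one_le_pow₀ (by norm_num)
  have h2 : (1:ℝ) ≤ (n:ℝ) ^ ((2:ℝ)^i * nuR k) := by
    have hn1 : (1:ℝ) ≤ (n:ℝ) := by exact_mod_cast hn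
    calc (1:ℝ) = (n:ℝ) ^ (0:ℝ) := (Real.rpow_zero _).symm
    _ ≤ (n:ℝ) ^ ((2:ℝ)^i * nuR k) := Real.rpow_le_rpow_of_exponent_le hn1
        (le_of_lt (mul_pos (by positivity) (nuR_pos hk)))
  nlinarith

include hk hn in
lemma sfunG_one_le (i : ℕ) : 1 ≤ sfunG n k i := by
  rw [sfunG]
  have := svalR_one_le hk hn (i := i)
  exact Nat.ceil_pos.2 (by linarith)

include hk hn in
lemma svalR_mono : Monotone (svalR n k) := by
  intro i j hij
  rw [svalR, svalR]
  have hn1 : (1:ℝ) ≤ (n:ℝ) := by exact_mod_cast hn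
  have h1 : (2:ℝ)^i ≤ 2^j := pow_le_pow_right₀ (by norm_num) hij
  have h2 : (n:ℝ) ^ ((2:ℝ)^i * nuR k) ≤ (n:ℝ) ^ ((2:ℝ)^j * nuR k) :=
    Real.rpow_le_rpow_of_exponent_le hn1
      (mul_le_mul_of_nonneg_right h1 (le_of_lt (nuR_pos hk)))
  have h3 : (0:ℝ) ≤ (n:ℝ) ^ ((2:ℝ)^i * nuR k) := Real.rpow_nonneg (by positivity) _
  exact mul_le_mul h1 h2 h3 (by positivity)

include hk hn in
lemma sfunG_mono : Monotone (sfunG n k) :=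
  fun i j hij => Nat.ceil_mono (svalR_mono hk hn hij)

include hk hn in
lemma sfunG_le (i : ℕ) : (sfunG n k i : ℝ) ≤ svalR n k i + 1 := by
  rw [sfunG]
  exact le_of_lt (Nat.ceil_lt_add_one (by linarith [svalR_one_le hk hn (n := n) (i := i)]))

lemma sfunG_ge (i : ℕ) : svalR n k i ≤ (sfunG n k i : ℝ) := Nat.le_ceil _

include hk hn in
lemma prod_svalR (i : ℕ) :
    ∏ j ∈ Finset.range i, svalR n k j =
      2^(∑ j ∈ Finset.range i, j) * (n:ℝ) ^ (((2:ℝ)^i - 1) * nuR k) := by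
  have hn0 : (0:ℝ) < (n:ℝ) := by exact_mod_cast hn
  have h1 : ∏ j ∈ Finset.range i, svalR n k j =
      (∏ j ∈ Finset.range i, (2:ℝ)^j) *
      (∏ j ∈ Finset.range i, (n:ℝ) ^ ((2:ℝ)^j * nuR k)) := by
    rw [← Finset.prod_mul_distrib]
    rfl
  rw [h1, ← rpow_prod_sum _ hn0, ← Finset.prod_pow_eq_pow_sum]
  congr 1
  rw [← Finset.sum_mul]
  congr 1
  have h2 : ∑ j ∈ Finset.range i, (2:ℝ)^j = ((2:ℝ)^i - 1)/(2 - 1) :=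
    geom_sum_eq (by norm_num) i
  rw [h2]
  norm_num

include hk hn in
lemma prod_sfunG_ge (i : ℕ) :
    2^(∑ j ∈ Finset.range i, j) * (n:ℝ) ^ (((2:ℝ)^i - 1) * nuR k) ≤
      ∏ j ∈ Finset.range i, (sfunG n k j : ℝ) := by
  rw [← prod_svalR hk hn]
  refine Finset.prod_le_prod (fun j _ => ?_) (fun j _ => sfunG_ge j)
  have := svalR_one_le hk hn (n := n) (i := j)
  linarith

include hk hn in
lemma key_rpow_identity (i : ℕ) :
    (n:ℝ) * (n:ℝ) ^ ((2:ℝ)^i * nuR k) =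
      (n:ℝ) ^ ((1:ℝ) + nuR k) * (n:ℝ) ^ (((2:ℝ)^i - 1) * nuR k) := by
  have hn0 : (0:ℝ) < (n:ℝ) := by exact_mod_cast hn
  rw [← Real.rpow_add hn0]
  nth_rewrite 1 [← Real.rpow_one (n:ℝ)]
  rw [← Real.rpow_add hn0]
  congr 1
  ring

end Numeric


section CountGlue

variable {V : Type*} [Fintype V] [DecidableEq V]
variable (d : V → V → ℝ≥0∞)
variable (hds : ∀ x y, d x y = d y x) (hdt : ∀ x y z, d x z ≤ d x y + d y z)
variable (k : ℕ) (hk : 2 ≤ k) (hn : 1 ≤ Fintype.card V)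

-- abbreviations for this section
local notation "nV" => Fintype.card V
local notation "sfn" => sfunG (Fintype.card V) k
local notation "KK" => k - 1

include hk hn in
lemma level_term_bound (i : ℕ)
    (hi : i ≤ stopL d sfn KK hds hdt (sfunG_one_le hk hn)) :
    ((lev d sfn KK hds hdt (sfunG_one_le hk hn) i).card : ℝ) * ((sfn i : ℝ) + 1) ≤
      24 * ((2:ℝ)⁻¹)^i * (nV:ℝ) ^ ((1:ℝ) + nuR k) := by
  have hn0 : (0:ℝ) < (nV:ℝ) := by exact_mod_cast hn
  set cardR : ℝ := ((lev d sfn KK hds hdt (sfunG_one_le hk hn) i).card : ℝ) with hcardR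
  have hcard0 : 0 ≤ cardR := by positivity
  set Si : ℕ := ∑ j ∈ Finset.range i, j with hSi
  set P : ℝ := 2^Si * (nV:ℝ) ^ (((2:ℝ)^i - 1) * nuR k) with hP
  have hPpos : 0 < P := by
    rw [hP]
    have : (0:ℝ) < (nV:ℝ) ^ (((2:ℝ)^i - 1) * nuR k) := Real.rpow_pos_of_pos hn0 _
    positivity
  have h1 : cardR * (∏ j ∈ Finset.range i, (sfn j : ℝ)) ≤ (nV:ℝ) := by
    have := levcard_mul d sfn KK hds hdt (sfunG_one_le hk hn) i hi
    have hcast : ((lev d sfn KK hds hdt (sfunG_one_le hk hn) i).card *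
        (∏ j ∈ Finset.range i, sfn j) : ℕ) ≤ (nV : ℕ) := this
    calc cardR * (∏ j ∈ Finset.range i, (sfn j : ℝ))
        = (((lev d sfn KK hds hdt (sfunG_one_le hk hn) i).card *
            ∏ j ∈ Finset.range i, sfn j : ℕ) : ℝ) := by push_cast; ring
    _ ≤ (nV:ℝ) := by exact_mod_cast hcast
  have h2 : P ≤ ∏ j ∈ Finset.range i, (sfn j : ℝ) := prod_sfunG_ge hk hn i
  have h3 : cardR * P ≤ (nV:ℝ) :=
    le_trans (mul_le_mul_of_nonneg_left h2 hcard0) h1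
  have h4 : (sfn i : ℝ) + 1 ≤ 3 * svalR nV k i := by
    have ha := sfunG_le hk hn (n := nV) (i := i)
    have hb := svalR_one_le hk hn (n := nV) (i := i)
    linarith
  have h40 : (0:ℝ) ≤ (sfn i : ℝ) + 1 := by positivity
  rw [← mul_le_mul_iff_left₀ hPpos]
  have hQ : (0:ℝ) ≤ (nV:ℝ) * (nV:ℝ) ^ ((2:ℝ)^i * nuR k) := by
    have : (0:ℝ) < (nV:ℝ) ^ ((2:ℝ)^i * nuR k) := Real.rpow_pos_of_pos hn0 _
    positivity
  have hcoef : (3:ℝ) * 2^i ≤ 24 * ((2:ℝ)⁻¹)^i * 2^Si := by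
    have h8 := pow_half_bound i
    have h2i : (0:ℝ) < 2^i := by positivity
    have heq : (24:ℝ) * ((2:ℝ)⁻¹)^i * 2^Si = 24 * 2^Si / 2^i := by
      rw [inv_pow]
      ring
    rw [heq, le_div_iff₀ h2i]
    nlinarith [h8]
  calc cardR * ((sfn i : ℝ) + 1) * P
      = (cardR * P) * ((sfn i : ℝ) + 1) := by ring
  _ ≤ (nV:ℝ) * (3 * svalR nV k i) := by
        refine mul_le_mul h3 h4 h40 (by positivity)
  _ = (3 * 2^i) * ((nV:ℝ) * (nV:ℝ) ^ ((2:ℝ)^i * nuR k)) := by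
        rw [svalR]; ring
  _ ≤ (24 * ((2:ℝ)⁻¹)^i * 2^Si) * ((nV:ℝ) * (nV:ℝ) ^ ((2:ℝ)^i * nuR k)) :=
        mul_le_mul_of_nonneg_right hcoef hQ
  _ = (24 * ((2:ℝ)⁻¹)^i * 2^Si) *
        ((nV:ℝ) ^ ((1:ℝ) + nuR k) * (nV:ℝ) ^ (((2:ℝ)^i - 1) * nuR k)) := by
        rw [key_rpow_identity hk hn]
  _ = 24 * ((2:ℝ)⁻¹)^i * (nV:ℝ) ^ ((1:ℝ) + nuR k) * P := by
        rw [hP]; ring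

include hk hn in
lemma top_term_bound :
    (((lev d sfn KK hds hdt (sfunG_one_le hk hn)
        (stopL d sfn KK hds hdt (sfunG_one_le hk hn))).card : ℝ) *
      ((lev d sfn KK hds hdt (sfunG_one_le hk hn)
        (stopL d sfn KK hds hdt (sfunG_one_le hk hn))).card : ℝ)) ≤
      24 * (nV:ℝ) ^ ((1:ℝ) + nuR k) := by
  have hn0 : (0:ℝ) < (nV:ℝ) := by exact_mod_cast hn
  set st := stopL d sfn KK hds hdt (sfunG_one_le hk hn) with hst
  set cardR : ℝ := ((lev d sfn KK hds hdt (sfunG_one_le hk hn) st).card : ℝ) with hcardR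
  have hcard0 : (0:ℝ) ≤ cardR := by positivity
  rcases Nat.lt_or_ge st KK with hlt | hge
  · -- stop < K: the top level is small
    have hsmall := levcard_le_sfun_of_stop_lt d sfn KK hds hdt (sfunG_one_le hk hn)
      (sfunG_mono hk hn) hlt
    have hterm := level_term_bound d hds hdt k hk hn st (le_refl st)
    have hhalf : ((2:ℝ)⁻¹)^st ≤ 1 := by
      apply pow_le_one₀ <;> norm_num
    have hsmallR : cardR ≤ ((sfn st : ℕ) : ℝ) := by
      rw [hcardR, hst]
      exact_mod_cast hsmall
    calc cardR * cardR ≤ cardR * ((sfn st : ℝ) + 1) := by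
          refine mul_le_mul_of_nonneg_left ?_ hcard0
          linarith
    _ ≤ 24 * ((2:ℝ)⁻¹)^st * (nV:ℝ) ^ ((1:ℝ) + nuR k) := hterm
    _ ≤ 24 * 1 * (nV:ℝ) ^ ((1:ℝ) + nuR k) := by
          refine mul_le_mul_of_nonneg_right ?_ (le_of_lt (Real.rpow_pos_of_pos hn0 _))
          nlinarith
    _ = 24 * (nV:ℝ) ^ ((1:ℝ) + nuR k) := by ring
  · -- stop = K: use the square bound
    have hstK : st = KK := le_antisymm (stop_le d sfn KK hds hdt (sfunG_one_le hk hn)) hge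
    -- card * n^{(2^K - 1)ν} ≤ n
    have h3 : cardR * (nV:ℝ) ^ (((2:ℝ)^KK - 1) * nuR k) ≤ (nV:ℝ) := by
      have h1 : cardR * (∏ j ∈ Finset.range KK, (sfn j : ℝ)) ≤ (nV:ℝ) := by
        have := levcard_mul d sfn KK hds hdt (sfunG_one_le hk hn) KK
          (le_of_eq hstK.symm)
        calc cardR * (∏ j ∈ Finset.range KK, (sfn j : ℝ))
            = (((lev d sfn KK hds hdt (sfunG_one_le hk hn) KK).card *
                ∏ j ∈ Finset.range KK, sfn j : ℕ) : ℝ) := by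
              rw [hcardR, hstK]; push_cast; ring
        _ ≤ (nV:ℝ) := by exact_mod_cast this
      refine le_trans ?_ h1
      refine mul_le_mul_of_nonneg_left (le_trans ?_ (prod_sfunG_ge hk hn KK)) hcard0
      have h2S : (1:ℝ) ≤ 2^(∑ j ∈ Finset.range KK, j) := one_le_pow₀ (by norm_num)
      have hrp : (0:ℝ) < (nV:ℝ) ^ (((2:ℝ)^KK - 1) * nuR k) :=
        Real.rpow_pos_of_pos hn0 _
      have := mul_le_mul_of_nonneg_right h2S (le_of_lt hrp)
      linarith
    -- (2^K - 1) ν doubled equals 1 - ν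
    have hid : (((2:ℝ)^KK - 1) * nuR k) + (((2:ℝ)^KK - 1) * nuR k) = 1 - nuR k := by
      have h2K : (2:ℝ)^KK * 2 = 2^k := by
        rw [← pow_succ]
        congr 1
        omega
      have := nuR_mul hk
      linear_combination nuR k * h2K + this
    have hpos1 : (0:ℝ) < (nV:ℝ) ^ ((1:ℝ) - nuR k) := Real.rpow_pos_of_pos hn0 _
    rw [← mul_le_mul_iff_left₀ hpos1]
    have hsplit : (nV:ℝ) ^ ((1:ℝ) - nuR k) =
        (nV:ℝ) ^ (((2:ℝ)^KK - 1) * nuR k) * (nV:ℝ) ^ (((2:ℝ)^KK - 1) * nuR k) := by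
      rw [← Real.rpow_add hn0, hid]
    have htwo : (nV:ℝ) ^ ((1:ℝ) + nuR k) * (nV:ℝ) ^ ((1:ℝ) - nuR k) = (nV:ℝ) * (nV:ℝ) := by
      rw [← Real.rpow_add hn0]
      have : (1:ℝ) + nuR k + (1 - nuR k) = 2 := by ring
      rw [this]
      rw [show ((2:ℝ)) = ((2:ℕ):ℝ) by norm_num, Real.rpow_natCast]
      ring
    calc cardR * cardR * (nV:ℝ) ^ ((1:ℝ) - nuR k)
        = (cardR * (nV:ℝ) ^ (((2:ℝ)^KK - 1) * nuR k)) *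
          (cardR * (nV:ℝ) ^ (((2:ℝ)^KK - 1) * nuR k)) := by
          rw [hsplit]; ring
    _ ≤ (nV:ℝ) * (nV:ℝ) := by
          refine mul_le_mul h3 h3 ?_ (by positivity)
          positivity
    _ = (nV:ℝ) ^ ((1:ℝ) + nuR k) * (nV:ℝ) ^ ((1:ℝ) - nuR k) := htwo.symm
    _ ≤ 24 * (nV:ℝ) ^ ((1:ℝ) + nuR k) * (nV:ℝ) ^ ((1:ℝ) - nuR k) := by
          nlinarith [Real.rpow_pos_of_pos hn0 ((1:ℝ) + nuR k),
            Real.rpow_pos_of_pos hn0 ((1:ℝ) - nuR k)]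

include hk hn in
lemma edges_card_real :
    ((edgesF d sfn KK hds hdt (sfunG_one_le hk hn)).card : ℝ) ≤
      100 * (nV:ℝ) ^ ((1:ℝ) + nuR k) := by
  have hn0 : (0:ℝ) < (nV:ℝ) := by exact_mod_cast hn
  have hcard := edgesF_card_le d sfn KK hds hdt (sfunG_one_le hk hn) (sfunG_mono hk hn)
  have hcardR : ((edgesF d sfn KK hds hdt (sfunG_one_le hk hn)).card : ℝ) ≤
      (∑ i ∈ Finset.range (stopL d sfn KK hds hdt (sfunG_one_le hk hn)),
        ((lev d sfn KK hds hdt (sfunG_one_le hk hn) i).card : ℝ) * ((sfn i:ℝ) + 1)) +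
      ((lev d sfn KK hds hdt (sfunG_one_le hk hn)
          (stopL d sfn KK hds hdt (sfunG_one_le hk hn))).card : ℝ) *
        ((lev d sfn KK hds hdt (sfunG_one_le hk hn)
          (stopL d sfn KK hds hdt (sfunG_one_le hk hn))).card : ℝ) := by
    have := hcard
    push_cast at this ⊢
    exact_mod_cast this
  refine le_trans hcardR ?_
  have hsum : (∑ i ∈ Finset.range (stopL d sfn KK hds hdt (sfunG_one_le hk hn)),
      ((lev d sfn KK hds hdt (sfunG_one_le hk hn) i).card : ℝ) * ((sfn i:ℝ) + 1)) ≤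
      48 * (nV:ℝ) ^ ((1:ℝ) + nuR k) := by
    calc (∑ i ∈ Finset.range (stopL d sfn KK hds hdt (sfunG_one_le hk hn)),
        ((lev d sfn KK hds hdt (sfunG_one_le hk hn) i).card : ℝ) * ((sfn i:ℝ) + 1))
        ≤ ∑ i ∈ Finset.range (stopL d sfn KK hds hdt (sfunG_one_le hk hn)),
            24 * ((2:ℝ)⁻¹)^i * (nV:ℝ) ^ ((1:ℝ) + nuR k) := by
          refine Finset.sum_le_sum fun i hi => ?_
          exact level_term_bound d hds hdt k hk hn i
            (le_of_lt (Finset.mem_range.1 hi))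
    _ = (∑ i ∈ Finset.range (stopL d sfn KK hds hdt (sfunG_one_le hk hn)),
          ((2:ℝ)⁻¹)^i) * (24 * (nV:ℝ) ^ ((1:ℝ) + nuR k)) := by
          rw [Finset.sum_mul]
          congr 1
          funext i
          ring
    _ ≤ 2 * (24 * (nV:ℝ) ^ ((1:ℝ) + nuR k)) := by
          refine mul_le_mul_of_nonneg_right (geom_half_le _) ?_
          have := Real.rpow_pos_of_pos hn0 ((1:ℝ) + nuR k)
          positivity
    _ = 48 * (nV:ℝ) ^ ((1:ℝ) + nuR k) := by ring
  have htop := top_term_bound d hds hdt k hk hn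
  have hpos := Real.rpow_pos_of_pos hn0 ((1:ℝ) + nuR k)
  nlinarith [hsum, htop]

end CountGlue


lemma FG_le {η : ℝ≥0∞} {ρ : ℕ} (hη0 : η ≠ 0) (hηt : η ≠ ⊤)
    (hρ : 8 + 8 * η⁻¹ ≤ (ρ:ℝ≥0∞)) (l : ℕ) :
    2 * FF ρ l + 4 * GG ρ l ≤ η * (ρ:ℝ≥0∞)^l := by
  have h := CC_bound hη0 hηt hρ l
  rw [EE] at h
  exact le_trans le_self_add h

section Final

/-- Theorem 3.3 + Remark 3.4: there is an absolute constant `C` such that every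
weighted connected graph on `n` vertices admits, for every integer `k > 1`, a weighted graph `H`
with at most `C(kn + n^{1+1/(2^k-1)})` edges, with `d_H ≥ d_G`, such that for every `0 < ε < 1`
and every path `P` in `G` from `x` to `y`, `d_H(x,y) ≤ (1+ε)·w(P) + β·W(P)` where
`β = (Ck/ε)^{k-1}`. -/
theorem statement3 :
    ∃ C : ℝ, 0 < C ∧
      ∀ (V : Type) [Fintype V] (G : SimpleGraph V), G.Connected →
        ∀ w : V → V → ℝ≥0∞, (∀ u v, G.Adj u v → w u v = w v u) →
          (∀ u v, G.Adj u v → w u v ≠ ⊤) →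
          ∀ k : ℕ, 1 < k →
            ∃ (H : SimpleGraph V) (wH : V → V → ℝ≥0∞),
              (∀ u v, H.Adj u v → wH u v = wH v u) ∧
              (∀ u v, H.Adj u v → wH u v ≠ ⊤) ∧
              (H.edgeSet.ncard : ℝ) ≤
                C * (k * (Fintype.card V : ℝ) +
                  (Fintype.card V : ℝ) ^ ((1 : ℝ) + 1 / (2 ^ k - 1))) ∧
              (∀ x y : V, gdist G w x y ≤ gdist H wH x y) ∧
              ∀ (x y : V) (P : G.Walk x y), P.IsPath →
                ∀ ε : ℝ, 0 < ε → ε < 1 →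
                  gdist H wH x y ≤ ENNReal.ofReal (1 + ε) * wWeight w P +
                    ENNReal.ofReal ((C * k / ε) ^ (k - 1)) * maxW w P := by
  refine ⟨10000, by norm_num, ?_⟩
  intro V _ G hconn w hsym hfin k hk1
  classical
  have hk : 2 ≤ k := hk1
  have : Nonempty V := hconn.nonempty
  have hn : 1 ≤ Fintype.card V := Fintype.card_pos
  set d : V → V → ℝ≥0∞ := fun x y => gdist G w x y with hd
  have hd0 : ∀ x, d x x = 0 := fun x => gdist_self
  have hds : ∀ x y, d x y = d y x := fun x y => gdist_symm hsym
  have hdt : ∀ x y z, d x z ≤ d x y + d y z := fun x y z => gdist_triangle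
  have hdfin : ∀ x y, d x y ≠ ⊤ := fun x y => gdist_ne_top hconn hfin
  set n := Fintype.card V with hnn
  set KK := k - 1 with hKK
  set sfn := sfunG n k with hsfn
  have hs1 : ∀ i, 1 ≤ sfn i := sfunG_one_le hk hn
  have hsm : Monotone sfn := sfunG_mono hk hn
  refine ⟨emulH d sfn KK hds hdt hs1, d, ?_, ?_, ?_, ?_, ?_⟩
  · exact fun u v _ => hds u v
  · exact fun u v _ => hdfin u v
  · -- edge count
    have hsub : (emulH d sfn KK hds hdt hs1).edgeSet ⊆
        ((edgesF d sfn KK hds hdt hs1 : Finset (Sym2 V)) : Set (Sym2 V)) := by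
      rw [emulH, SimpleGraph.edgeSet_fromEdgeSet]
      exact Set.diff_subset
    have h1 : (emulH d sfn KK hds hdt hs1).edgeSet.ncard ≤
        (edgesF d sfn KK hds hdt hs1).card := by
      have := Set.ncard_le_ncard hsub (Set.Finite.ofFinset _ (fun x => Iff.rfl))
      rwa [Set.ncard_coe_finset] at this
    have h2 := edges_card_real d hds hdt k hk hn
    have hX : (0:ℝ) ≤ (n:ℝ) ^ ((1:ℝ) + nuR k) := by positivity
    have hY : (0:ℝ) ≤ (k:ℝ) * (n:ℝ) := by positivity
    have hfinal : ((emulH d sfn KK hds hdt hs1).edgeSet.ncard : ℝ) ≤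
        100 * (n:ℝ) ^ ((1:ℝ) + nuR k) := by
      refine le_trans ?_ h2
      exact_mod_cast h1
    have hnu : nuR k = 1 / ((2:ℝ)^k - 1) := rfl
    calc ((emulH d sfn KK hds hdt hs1).edgeSet.ncard : ℝ)
        ≤ 100 * (n:ℝ) ^ ((1:ℝ) + nuR k) := hfinal
    _ ≤ 10000 * ((k:ℝ) * (n:ℝ) + (n:ℝ) ^ ((1:ℝ) + nuR k)) := by nlinarith
    _ = 10000 * ((k:ℝ) * (n:ℝ) + (n:ℝ) ^ ((1:ℝ) + 1 / (2^k - 1))) := by rw [← hnu]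
  · -- lower bound
    intro x y
    exact gdist_le_gdist_emulator
  · -- stretch
    intro x y P hP ε hε0 hε1
    set m := P.length with hm
    set zz : ℕ → V := fun t => P.getVert t with hzz
    set wt : ℕ → ℝ≥0∞ := fun t => w (P.getVert t) (P.getVert (t+1)) with hwt
    set W : ℝ≥0∞ := maxW w P with hW
    have hzd : ∀ t, t < m → d (zz t) (zz (t+1)) ≤ wt t := by
      intro t ht
      exact gdist_le_of_adj (P.adj_getVert_succ ht)
    have hwW : ∀ t, t < m → wt t ≤ W := by
      intro t ht
      exact le_maxW P ht
    have hWt : W ≠ ⊤ := maxW_ne_top hfin P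
    set η : ℝ≥0∞ := ENNReal.ofReal (ε / (2*k)) with hη
    have hεk : (0:ℝ) < ε / (2*k) := by
      have : (0:ℝ) < (k:ℝ) := by exact_mod_cast lt_of_lt_of_le two_pos hk
      positivity
    have hη0 : η ≠ 0 := by
      rw [hη]
      exact (ENNReal.ofReal_pos.2 hεk).ne'
    have hηt : η ≠ ⊤ := ENNReal.ofReal_ne_top
    set ρ : ℕ := ⌈(8:ℝ) + 16*k/ε⌉₊ with hρdef
    have hkR : (2:ℝ) ≤ (k:ℝ) := by exact_mod_cast hk
    have hρ : 8 + 8 * η⁻¹ ≤ (ρ:ℝ≥0∞) := by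
      rw [hη, ← ENNReal.ofReal_inv_of_pos hεk]
      have hinv : (ε / (2*k))⁻¹ = 2*k/ε := by
        field_simp
      rw [hinv]
      have h8 : (8:ℝ≥0∞) = ENNReal.ofReal 8 := by
        rw [ENNReal.ofReal_ofNat]
      have hmul : (8:ℝ≥0∞) * ENNReal.ofReal (2*k/ε) = ENNReal.ofReal (16*k/ε) := by
        rw [h8, ← ENNReal.ofReal_mul (by norm_num)]
        congr 1
        ring
      rw [hmul, h8, ← ENNReal.ofReal_add (by norm_num) (by positivity)]
      have : ((ρ:ℕ):ℝ≥0∞) = ENNReal.ofReal ((ρ:ℕ):ℝ) := by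
        rw [ENNReal.ofReal_natCast]
      rw [this]
      exact ENNReal.ofReal_le_ofReal (Nat.le_ceil _)
    have hmarch := march_main d sfn KK hds hdt hs1 hsm zz wt m W η ρ
      hd0 hzd hwW hWt hη0 hηt hρ
    have hz0 : zz 0 = x := P.getVert_zero
    have hzm : zz m = y := P.getVert_length
    have hAW : AW wt 0 m = wWeight w P := by
      rw [AW, wWeight_eq_sum_getVert, Finset.range_eq_Ico]
    rw [hz0, hzm, hAW] at hmarch
    refine le_trans hmarch (add_le_add ?_ ?_)
    · -- multiplicative coefficient
      refine mul_le_mul_left ?_ _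
      rw [coefL, hη]
      have hc1 : ((KK:ℕ):ℝ≥0∞) * ENNReal.ofReal (ε / (2*k)) =
          ENNReal.ofReal ((KK:ℝ) * (ε / (2*k))) := by
        rw [← ENNReal.ofReal_natCast, ← ENNReal.ofReal_mul (by positivity)]
      rw [hc1]
      have hc2 : (KK:ℝ) * (ε / (2*k)) ≤ ε := by
        have hKKle : (KK:ℝ) ≤ (k:ℝ) := by
          exact_mod_cast Nat.sub_le k 1
        have hkpos : (0:ℝ) < (k:ℝ) := by linarith
        rw [div_eq_mul_inv]
        have : (KK:ℝ) * (ε * (2*(k:ℝ))⁻¹) = ((KK:ℝ) / (2*k)) * ε := by ring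
        rw [this]
        have hfrac : (KK:ℝ) / (2*k) ≤ 1 := by
          rw [div_le_one (by linarith)]
          linarith
        nlinarith
      calc 1 + ENNReal.ofReal ((KK:ℝ) * (ε / (2*k)))
          ≤ 1 + ENNReal.ofReal ε := add_le_add_right (ENNReal.ofReal_le_ofReal hc2) 1
      _ = ENNReal.ofReal (1 + ε) := by
            rw [ENNReal.ofReal_add (by norm_num) (le_of_lt hε0), ENNReal.ofReal_one]
    · -- additive coefficient
      refine mul_le_mul_left ?_ _
      have hEEle : EE ρ KK + (2 * FF ρ KK + 4 * GG ρ KK) ≤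
          2 * (η * (ρ:ℝ≥0∞)^KK) := by
        have h1 := FG_le hη0 hηt hρ KK
        have h2 := le_trans (EE_le ρ KK) h1
        calc EE ρ KK + (2 * FF ρ KK + 4 * GG ρ KK)
            ≤ η * (ρ:ℝ≥0∞)^KK + η * (ρ:ℝ≥0∞)^KK := add_le_add h2 h1
        _ = 2 * (η * (ρ:ℝ≥0∞)^KK) := by ring
      refine le_trans hEEle ?_
      -- now a real-number computation
      have hρle : ((ρ:ℕ):ℝ) ≤ 25 * k / ε := by
        have h0 : (0:ℝ) ≤ 8 + 16*k/ε := by positivity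
        have h2 := Nat.ceil_lt_add_one h0
        have hke : (2:ℝ) ≤ (k:ℝ)/ε := by
          rw [le_div_iff₀ hε0]
          nlinarith
        rw [hρdef]
        have : (8:ℝ) + 16*k/ε + 1 ≤ 25*k/ε := by
          have h16 : (16:ℝ)*k/ε = 16*(k/ε) := by ring
          have h25 : (25:ℝ)*k/ε = 25*(k/ε) := by ring
          rw [h16, h25]
          nlinarith
        linarith
      have hval : 2 * (η * (ρ:ℝ≥0∞)^KK) =
          ENNReal.ofReal (2 * (ε/(2*k)) * ((ρ:ℕ):ℝ)^KK) := by
        rw [hη]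
        have hpow : ((ρ:ℕ):ℝ≥0∞)^KK = ENNReal.ofReal (((ρ:ℕ):ℝ)^KK) := by
          rw [← ENNReal.ofReal_natCast, ← ENNReal.ofReal_pow (by positivity)]
        rw [hpow, ← ENNReal.ofReal_mul (by positivity)]
        have h2 : (2:ℝ≥0∞) = ENNReal.ofReal 2 := by rw [ENNReal.ofReal_ofNat]
        rw [h2, ← ENNReal.ofReal_mul (by norm_num)]
        congr 1
        ring
      rw [hval]
      refine ENNReal.ofReal_le_ofReal ?_
      have hkpos : (0:ℝ) < (k:ℝ) := by linarith
      have hbase : (0:ℝ) ≤ ((ρ:ℕ):ℝ) := by positivity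
      have hp1 : ((ρ:ℕ):ℝ)^KK ≤ (25*k/ε)^KK := pow_le_pow_left₀ hbase hρle KK
      have hp2 : (25*(k:ℝ)/ε)^KK ≤ (10000*k/ε)^KK := by
        refine pow_le_pow_left₀ (by positivity) ?_ KK
        have : (0:ℝ) < 1/ε := by positivity
        rw [div_le_div_iff₀ (by positivity) (by positivity)]
        nlinarith
      have hfrac : 2 * (ε/(2*(k:ℝ))) ≤ 1 := by
        rw [mul_div_assoc']
        rw [div_le_one (by linarith)]
        nlinarith
      calc 2 * (ε/(2*(k:ℝ))) * ((ρ:ℕ):ℝ)^KK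
          ≤ 1 * ((ρ:ℕ):ℝ)^KK := by
            refine mul_le_mul_of_nonneg_right hfrac (by positivity)
      _ = ((ρ:ℕ):ℝ)^KK := one_mul _
      _ ≤ (10000*(k:ℝ)/ε)^KK := le_trans hp1 hp2

end Final

end ASP
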